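/- arXiv:2111.05457 — 6 statements merged into one kernel-verified Lean document; each statement's English description precedes it below -/
import Mathlib

section
/- Let x be a point in the Euclidean plane ℝ² and let S be a finite set of points in ℝ² such that every s ∈ S satisfies 0 < dist(s, x) ≤ 1, and any two distinct points of S are at Euclidean distance strictly greater than 1 from each other. Then S contains at most 5 points. -/
open Real Complex

/-- Real part of `z * conj w` in polar terms. -/
lemma re_mul_conj_eq (z w : ℂ) :
    (z * (starRingEnd ℂ) w).re = ‖z‖ * ‖w‖ * Real.cos (arg z - arg w) := by
  have hz1 : ‖z‖ * Real.cos (arg z) = z.re := Complex.norm_mul_cos_arg z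
  have hz2 : ‖z‖ * Real.sin (arg z) = z.im := Complex.norm_mul_sin_arg z
  have hw1 : ‖w‖ * Real.cos (arg w) = w.re := Complex.norm_mul_cos_arg w
  have hw2 : ‖w‖ * Real.sin (arg w) = w.im := Complex.norm_mul_sin_arg w
  rw [Real.cos_sub]
  simp only [Complex.mul_re, Complex.conj_re, Complex.conj_im]
  rw [← hz1, ← hz2, ← hw1, ← hw2]; ring

lemma cos_arg_lt_half {z w : ℂ} (hz : ‖z‖ ≤ 1) (hw : ‖w‖ ≤ 1)
    (hz0 : z ≠ 0) (hw0 : w ≠ 0) (hd : 1 < ‖z - w‖) :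
    Real.cos (arg z - arg w) < 1 / 2 := by
  have ha : 0 < ‖z‖ := norm_pos_iff.mpr hz0
  have hb : 0 < ‖w‖ := norm_pos_iff.mpr hw0
  have hexp : ‖z - w‖ ^ 2 =
      ‖z‖ ^ 2 + ‖w‖ ^ 2 - 2 * (z * (starRingEnd ℂ) w).re := by
    simp only [← Complex.normSq_eq_norm_sq]
    simp [Complex.normSq_apply, Complex.mul_re, Complex.sub_re, Complex.sub_im,
      Complex.conj_re, Complex.conj_im]
    ring
  have h1 : 1 < ‖z - w‖ ^ 2 := by nlinarith
  rw [re_mul_conj_eq] at hexp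
  nlinarith [h1, hexp, mul_pos ha hb]

/-- If the cosine of the difference of two args is `< 1/2`, the abs of the difference
is strictly between `π/3` and `5π/3`. -/
lemma arg_gap {z w : ℂ} (h : Real.cos (arg z - arg w) < 1 / 2) :
    π / 3 < |arg z - arg w| ∧ |arg z - arg w| < 5 * π / 3 := by
  have hpi : (0:ℝ) < π := Real.pi_pos
  have hz1 := Complex.neg_pi_lt_arg z
  have hz2 := Complex.arg_le_pi z
  have hw1 := Complex.neg_pi_lt_arg w
  have hw2 := Complex.arg_le_pi w
  have habs : |arg z - arg w| < 2 * π := by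
    rw [abs_lt]; constructor <;> linarith
  have hcos : Real.cos |arg z - arg w| < 1 / 2 := by
    rcases abs_choice (arg z - arg w) with h' | h' <;> rw [h']
    · exact h
    · rwa [Real.cos_neg]
  constructor
  · by_contra hle
    push_neg at hle
    have : Real.cos |arg z - arg w| ≥ Real.cos (π / 3) :=
      Real.cos_le_cos_of_nonneg_of_le_pi (by positivity) (by linarith) hle
    rw [Real.cos_pi_div_three] at this
    linarith
  · by_contra hge
    push_neg at hge
    have h2 : Real.cos (2 * π - |arg z - arg w|) = Real.cos |arg z - arg w| :=
      Real.cos_two_pi_sub _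
    have : Real.cos (2 * π - |arg z - arg w|) ≥ Real.cos (π / 3) :=
      Real.cos_le_cos_of_nonneg_of_le_pi (by linarith) (by linarith) (by linarith)
    rw [Real.cos_pi_div_three, h2] at this
    linarith

/-- Combinatorial lemma: a finset of reals with pairwise distances in `(π/3, 5π/3)`
has at most 5 elements. -/
lemma card_le_five_of_gaps (A : Finset ℝ)
    (h : ∀ a ∈ A, ∀ b ∈ A, a ≠ b → π / 3 < |a - b| ∧ |a - b| < 5 * π / 3) :
    A.card ≤ 5 := by
  by_contra hc
  push_neg at hc
  obtain ⟨B, hBA, hB6⟩ := Finset.exists_subset_card_eq (by omega : 6 ≤ A.card)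
  have e := B.orderIsoOfFin hB6
  set a : Fin 6 → ℝ := fun i => (e i : ℝ) with ha
  have hmem : ∀ i, a i ∈ A := fun i => hBA (e i).2
  have hmono : ∀ i j : Fin 6, i < j → a i < a j := fun i j hij => by
    exact_mod_cast (e.lt_iff_lt.mpr hij)
  have hgap : ∀ i j : Fin 6, i < j → π / 3 < a j - a i := by
    intro i j hij
    have hlt := hmono i j hij
    have := (h _ (hmem i) _ (hmem j) (ne_of_lt hlt)).1
    rw [abs_sub_comm, abs_of_pos (by linarith)] at this
    linarith
  have h05 := (h _ (hmem 0) _ (hmem 5) (ne_of_lt (hmono 0 5 (by decide)))).2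
  rw [abs_sub_comm, abs_of_pos (by linarith [hmono 0 5 (by decide : (0:Fin 6) < 5)])] at h05
  have g01 := hgap 0 1 (by decide)
  have g12 := hgap 1 2 (by decide)
  have g23 := hgap 2 3 (by decide)
  have g34 := hgap 3 4 (by decide)
  have g45 := hgap 4 5 (by decide)
  linarith

/-- If `x` is a point in the Euclidean plane and `S` is a finset of points,
each at distance in `(0, 1]` from `x`, and pairwise at distance strictly greater than `1`,
then `|S| ≤ 5`. -/
theorem unit_disk_packing_five (x : EuclideanSpace ℝ (Fin 2))
    (S : Finset (EuclideanSpace ℝ (Fin 2)))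
    (hSx : ∀ s ∈ S, 0 < dist s x ∧ dist s x ≤ 1)
    (hpair : ∀ s ∈ S, ∀ t ∈ S, s ≠ t → 1 < dist s t) :
    S.card ≤ 5 := by
  classical
  set f := (Complex.isometryOfOrthonormal
    (EuclideanSpace.basisFun (Fin 2) ℝ)).symm with hf
  set z : EuclideanSpace ℝ (Fin 2) → ℂ := fun s => f s - f x with hz
  have hzabs : ∀ s ∈ S, 0 < ‖z s‖ ∧ ‖z s‖ ≤ 1 := by
    intro s hs
    have : ‖z s‖ = dist s x := by
      rw [hz]
      simp only [← Complex.dist_eq]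
      exact f.dist_map s x
    rw [this]; exact hSx s hs
  have hzd : ∀ s ∈ S, ∀ t ∈ S, s ≠ t → 1 < ‖z s - z t‖ := by
    intro s hs t ht hst
    have : ‖z s - z t‖ = dist s t := by
      rw [hz]
      have : f s - f x - (f t - f x) = f s - f t := by ring
      rw [this, ← Complex.dist_eq]
      exact f.dist_map s t
    rw [this]; exact hpair s hs t ht hst
  have hcos : ∀ s ∈ S, ∀ t ∈ S, s ≠ t →
      π / 3 < |arg (z s) - arg (z t)| ∧ |arg (z s) - arg (z t)| < 5 * π / 3 := by
    intro s hs t ht hst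
    refine arg_gap (cos_arg_lt_half (hzabs s hs).2 (hzabs t ht).2 ?_ ?_ (hzd s hs t ht hst))
    · exact norm_ne_zero_iff.mp (ne_of_gt (hzabs s hs).1)
    · exact norm_ne_zero_iff.mp (ne_of_gt (hzabs t ht).1)
  set A : Finset ℝ := S.image (fun s => arg (z s)) with hA
  have hinj : Set.InjOn (fun s => arg (z s)) S := by
    intro s hs t ht hst
    by_contra hne
    have := (hcos s hs t ht hne).1
    simp [hst] at this
    linarith [Real.pi_pos]
  have hcard : A.card = S.card := Finset.card_image_of_injOn hinj
  rw [← hcard]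
  apply card_le_five_of_gaps
  intro a haA b hbA hab
  obtain ⟨s, hs, rfl⟩ := Finset.mem_image.mp haA
  obtain ⟨t, ht, rfl⟩ := Finset.mem_image.mp hbA
  exact hcos s hs t ht (fun h => hab (by rw [h]))
end

section
/- Let x and y be points in the Euclidean plane ℝ² with 0 < dist(x, y) ≤ 1, and let S be a finite set of points in ℝ² such that every s ∈ S satisfies 0 < dist(s, x) ≤ 1 and dist(s, y) > 1, and any two distinct points of S are at Euclidean distance strictly greater than 1 from each other. Then S contains at most 4 points. -/
open Real

private lemma aux_cos_lt_half {u v : ℂ} (hu0 : u ≠ 0) (hv0 : v ≠ 0)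
    (hu : ‖u‖ ≤ 1) (hv : ‖v‖ ≤ 1)
    (h : 1 < ‖u - v‖) : Real.cos (u.arg - v.arg) < 1/2 := by
  have hru : 0 < ‖u‖ := by simpa using norm_pos_iff.mpr hu0
  have hrv : 0 < ‖v‖ := by simpa using norm_pos_iff.mpr hv0
  have hre : u.re * v.re + u.im * v.im
      = ‖u‖ * ‖v‖ * Real.cos (u.arg - v.arg) := by
    rw [Real.cos_sub, Complex.cos_arg hu0, Complex.cos_arg hv0,
      Complex.sin_arg, Complex.sin_arg]
    field_simp
  have h1 : ‖u - v‖ ^ 2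
      = ‖u‖ ^ 2 + ‖v‖ ^ 2 - 2 * (u.re * v.re + u.im * v.im) := by
    rw [Complex.sq_norm, Complex.sq_norm, Complex.sq_norm]
    simp only [Complex.normSq_apply, Complex.sub_re, Complex.sub_im]
    ring
  have h2 : 1 < ‖u - v‖ ^ 2 := by nlinarith [norm_nonneg (u - v)]
  nlinarith [mul_pos hru hrv]

private lemma aux_gap {a b : ℝ} (h : Real.cos (a - b) < 1/2) (hab : |a - b| ≤ π/3) : False := by
  have h1 : Real.cos (π/3) ≤ Real.cos |a - b| :=
    Real.cos_le_cos_of_nonneg_of_le_pi (abs_nonneg _) (by linarith [Real.pi_pos]) hab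
  rw [Real.cos_abs, Real.cos_pi_div_three] at h1
  linarith

private lemma phi_gap {a b : ℝ} (hcos : Real.cos (a - b) < 1/2) :
    π/3 < |(if 0 ≤ a then a else a + 2*π) - (if 0 ≤ b then b else b + 2*π)| := by
  by_contra h
  push_neg at h
  refine aux_gap ?_ h
  split_ifs with h1 h2 h2
  · exact hcos
  · rw [show a - (b + 2*π) = (a - b) - 2*π by ring, Real.cos_sub_two_pi]; exact hcos
  · rw [show a + 2*π - b = (a - b) + 2*π by ring, Real.cos_add_two_pi]; exact hcos
  · rw [show a + 2*π - (b + 2*π) = a - b by ring]; exact hcos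

private lemma phi_bounds {a : ℝ} (ha1 : -π < a) (ha2 : a ≤ π) (hc : Real.cos a < 1/2) :
    π/3 < (if 0 ≤ a then a else a + 2*π) ∧ (if 0 ≤ a then a else a + 2*π) < 5*π/3 := by
  have hpi := Real.pi_pos
  split_ifs with h
  · constructor
    · by_contra hle
      push_neg at hle
      have : Real.cos a ≥ 1/2 := by
        have := Real.cos_le_cos_of_nonneg_of_le_pi h (by linarith) hle
        rwa [Real.cos_pi_div_three] at this
      linarith
    · linarith
  · push_neg at h
    constructor
    · linarith
    · by_contra hle
      push_neg at hle
      have hna : -a ≤ π/3 := by linarith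
      have : Real.cos a ≥ 1/2 := by
        have := Real.cos_le_cos_of_nonneg_of_le_pi (by linarith : (0:ℝ) ≤ -a)
          (by linarith) hna
        rwa [Real.cos_pi_div_three, Real.cos_neg] at this
      linarith

private lemma finset_packing (T : Finset ℝ)
    (hT : ∀ a ∈ T, π/3 < a ∧ a < 5*π/3)
    (hgap : ∀ a ∈ T, ∀ b ∈ T, a ≠ b → π/3 < |a - b|) :
    T.card ≤ 4 := by
  by_contra h
  push_neg at h
  obtain ⟨T', hsub, hcard⟩ := Finset.exists_subset_card_eq (s := T) (n := 5) (by omega)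
  set e := T'.orderIsoOfFin hcard with he
  have hmem : ∀ i : Fin 5, ((e i : T') : ℝ) ∈ T := fun i => hsub (e i).2
  have hstep : ∀ i j : Fin 5, i < j → ((e i : T') : ℝ) + π/3 < ((e j : T') : ℝ) := by
    intro i j hij
    have h1 : ((e i : T') : ℝ) < ((e j : T') : ℝ) := by
      exact_mod_cast e.strictMono hij
    have h2 := hgap _ (hmem j) _ (hmem i) (by linarith)
    rw [abs_of_pos (by linarith)] at h2
    linarith
  have h0 := (hT _ (hmem 0)).1
  have h4 := (hT _ (hmem 4)).2
  have s01 := hstep 0 1 (by decide)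
  have s12 := hstep 1 2 (by decide)
  have s23 := hstep 2 3 (by decide)
  have s34 := hstep 3 4 (by decide)
  linarith

/-- If `x, y` are points in the Euclidean plane with `0 < dist x y ≤ 1`, and `S`
is a finite set of points each at distance in `(0, 1]` from `x` and at distance `> 1` from `y`,
pairwise at distance strictly greater than `1`, then `|S| ≤ 4`. -/
theorem sector_packing_four (x y : EuclideanSpace ℝ (Fin 2))
    (hxy : 0 < dist x y) (hxy' : dist x y ≤ 1)
    (S : Finset (EuclideanSpace ℝ (Fin 2)))
    (hSx : ∀ s ∈ S, 0 < dist s x ∧ dist s x ≤ 1)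
    (hSy : ∀ s ∈ S, 1 < dist s y)
    (hpair : ∀ s ∈ S, ∀ t ∈ S, s ≠ t → 1 < dist s t) :
    S.card ≤ 4 := by
  classical
  set g := Complex.orthonormalBasisOneI.repr.symm with hg
  set d : ℂ := g y - g x with hd
  have hdist : ∀ p q : EuclideanSpace ℝ (Fin 2), ‖g p - g q‖ = dist p q := by
    intro p q
    rw [← Complex.dist_eq, LinearIsometryEquiv.dist_map]
  have hdabs : ‖d‖ = dist y x := hdist y x
  have hd0 : ‖d‖ > 0 := by rw [hdabs, dist_comm]; exact hxy
  set c : ℂ := (starRingEnd ℂ) d / ((‖d‖ : ℝ) : ℂ) with hc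
  have hcabs : ‖c‖ = 1 := by
    rw [hc, norm_div, Complex.norm_conj, Complex.norm_real, Real.norm_eq_abs, abs_of_nonneg hd0.le,
      div_self hd0.ne']
  set m : EuclideanSpace ℝ (Fin 2) → ℂ := fun p => (g p - g x) * c with hm
  have hmdist : ∀ p q, ‖m p - m q‖ = dist p q := by
    intro p q
    rw [show m p - m q = (g p - g q) * c by rw [hm]; ring, norm_mul, hcabs, mul_one, hdist]
  have hmx : ∀ p, ‖m p‖ = dist p x := by
    intro p
    rw [hm, norm_mul, hcabs, mul_one, hdist]
  have hmy : m y = ((‖d‖ : ℝ) : ℂ) := by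
    rw [hm]
    simp only [← hd, hc]
    rw [mul_div_assoc', Complex.mul_conj, Complex.normSq_eq_norm_sq]
    have hne : ((‖d‖ : ℝ) : ℂ) ≠ 0 := by exact_mod_cast hd0.ne'
    rw [div_eq_iff hne]
    push_cast
    ring
  have hargy : (m y).arg = 0 := by rw [hmy]; exact Complex.arg_ofReal_of_nonneg hd0.le
  have hmy0 : m y ≠ 0 := by
    intro h
    rw [hmy] at h
    exact hd0.ne' (by exact_mod_cast h)
  have hms0 : ∀ s ∈ S, m s ≠ 0 := by
    intro s hs h
    have := hmx s
    rw [h, norm_zero] at this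
    exact ((hSx s hs).1.ne this).elim
  -- the angular coordinate
  set φ : EuclideanSpace ℝ (Fin 2) → ℝ :=
    fun s => if 0 ≤ (m s).arg then (m s).arg else (m s).arg + 2*π with hφ
  have hcs : ∀ s ∈ S, Real.cos (m s).arg < 1/2 := by
    intro s hs
    have := aux_cos_lt_half (hms0 s hs) hmy0
      (by rw [hmx]; exact (hSx s hs).2)
      (by rw [hmy, Complex.norm_real, Real.norm_eq_abs, abs_of_nonneg hd0.le, hdabs, dist_comm]; exact hxy')
      (by rw [hmdist]; exact hSy s hs)
    rwa [hargy, sub_zero] at this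
  have hbounds : ∀ s ∈ S, π/3 < φ s ∧ φ s < 5*π/3 := by
    intro s hs
    exact phi_bounds (Complex.neg_pi_lt_arg _) (Complex.arg_le_pi _) (hcs s hs)
  have hgaps : ∀ s ∈ S, ∀ t ∈ S, s ≠ t → π/3 < |φ s - φ t| := by
    intro s hs t ht hst
    refine phi_gap (aux_cos_lt_half (hms0 s hs) (hms0 t ht)
      (by rw [hmx]; exact (hSx s hs).2) (by rw [hmx]; exact (hSx t ht).2)
      (by rw [hmdist]; exact hpair s hs t ht hst))
  have hinj : Set.InjOn φ S := by
    intro s hs t ht hst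
    by_contra hne
    have := hgaps s hs t ht hne
    rw [hst, sub_self, abs_zero] at this
    linarith [Real.pi_pos]
  have hcard : (S.image φ).card = S.card := Finset.card_image_of_injOn hinj
  rw [← hcard]
  apply finset_packing
  · intro a ha
    obtain ⟨s, hs, rfl⟩ := Finset.mem_image.mp ha
    exact hbounds s hs
  · intro a ha b hb hab
    obtain ⟨s, hs, rfl⟩ := Finset.mem_image.mp ha
    obtain ⟨t, ht, rfl⟩ := Finset.mem_image.mp hb
    exact hgaps s hs t ht (fun h => hab (by rw [h]))
end

section
/- Let P be a nonempty finite set of points in the Euclidean plane ℝ² and let G be the unit disk graph on P. If D ⊆ P is a nonempty connected dominating set of G and W ⊆ P is an independent set of G, then |W| ≤ 4·|D| + 1. -/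
open Real Complex Finset

lemma udg_cos_arg_sub (z w : ℂ) (hz : z ≠ 0) (hw : w ≠ 0) :
    Real.cos (z.arg - w.arg) = (z.re * w.re + z.im * w.im) / (‖z‖ * ‖w‖) := by
  have hz' : ‖z‖ ≠ 0 := norm_ne_zero_iff.mpr hz
  have hw' : ‖w‖ ≠ 0 := norm_ne_zero_iff.mpr hw
  rw [Real.cos_sub, Complex.cos_arg hz, Complex.cos_arg hw, Complex.sin_arg, Complex.sin_arg]
  field_simp

lemma udg_cos_arg_mul (z w m : ℂ) (hz : z ≠ 0) (hw : w ≠ 0) (hm : m ≠ 0) :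
    Real.cos ((z*m).arg - (w*m).arg) = Real.cos (z.arg - w.arg) := by
  have habs : ‖m‖ ^ 2 = m.re^2 + m.im^2 := by
    rw [Complex.sq_norm, Complex.normSq_apply]; ring
  have hzp : (0:ℝ) < ‖z‖ := norm_pos_iff.mpr hz
  have hwp : (0:ℝ) < ‖w‖ := norm_pos_iff.mpr hw
  have hmp : (0:ℝ) < ‖m‖ := norm_pos_iff.mpr hm
  rw [udg_cos_arg_sub _ _ (mul_ne_zero hz hm) (mul_ne_zero hw hm),
    udg_cos_arg_sub z w hz hw, norm_mul, norm_mul]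
  rw [Complex.mul_re, Complex.mul_im, Complex.mul_re, Complex.mul_im]
  rw [div_eq_div_iff (by positivity) (by positivity)]
  linear_combination (-(1:ℝ)*(z.re*w.re + z.im*w.im) * (‖z‖ * ‖w‖)) * habs

lemma udg_angle_of_cos_lt (x : ℝ) (h2 : |x| < 2*π) (h : Real.cos x < 1/2) :
    π/3 < |x| ∧ |x| < 5*π/3 := by
  have hc : Real.cos |x| = Real.cos x := Real.cos_abs x
  have hpi := Real.pi_pos
  constructor
  · by_contra hle
    push_neg at hle
    have := Real.cos_le_cos_of_nonneg_of_le_pi (abs_nonneg x) (by linarith) hle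
    rw [Real.cos_pi_div_three] at this
    linarith [hc ▸ this]
  · by_contra hge
    push_neg at hge
    have key : Real.cos |x| = Real.cos (2*π - |x|) := by
      rw [Real.cos_two_pi_sub]
    have := Real.cos_le_cos_of_nonneg_of_le_pi (by linarith : (0:ℝ) ≤ 2*π - |x|)
      (by linarith : π/3 ≤ π) (by linarith : 2*π - |x| ≤ π/3)
    rw [Real.cos_pi_div_three] at this
    rw [← key, hc] at this
    linarith

lemma udg_angle_of_neg_half_lt (x : ℝ) (h1 : |x| ≤ π) (h : -(1/2) < Real.cos x) :
    |x| < 2*π/3 := by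
  have hc : Real.cos |x| = Real.cos x := Real.cos_abs x
  have hpi := Real.pi_pos
  by_contra hge
  push_neg at hge
  have := Real.cos_le_cos_of_nonneg_of_le_pi (by linarith : (0:ℝ) ≤ 2*π/3) h1 hge
  have h23 : Real.cos (2*π/3) = -(1/2) := by
    have : (2*π/3 : ℝ) = π - π/3 := by ring
    rw [this, Real.cos_pi_sub, Real.cos_pi_div_three]
  rw [h23, hc] at this
  linarith

lemma udg_exists_gap (g : ℝ) : ∀ (n : ℕ) (S : Finset ℝ), n + 1 ≤ S.card →
    (∀ x ∈ S, ∀ y ∈ S, x ≠ y → g < |x - y|) →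
    ∃ x ∈ S, ∃ y ∈ S, (n : ℝ) * g ≤ y - x := by
  intro n
  induction n with
  | zero =>
    intro S h _
    obtain ⟨x, hx⟩ := Finset.card_pos.mp (lt_of_lt_of_le Nat.zero_lt_one h)
    exact ⟨x, hx, x, hx, by simp⟩
  | succ n ih =>
    intro S h hp
    have hne : S.Nonempty := Finset.card_pos.mp (by omega)
    set M := S.max' hne with hMdef
    have hM : M ∈ S := S.max'_mem hne
    have h' : n + 1 ≤ (S.erase M).card := by
      rw [Finset.card_erase_of_mem hM]; omega
    obtain ⟨x, hx, y, hy, hxy⟩ := ih (S.erase M) h'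
      (fun a ha b hb => hp a (Finset.mem_of_mem_erase ha) b (Finset.mem_of_mem_erase hb))
    have hyM : y ≠ M := Finset.ne_of_mem_erase hy
    have hyS : y ∈ S := Finset.mem_of_mem_erase hy
    have hlt : y < M := lt_of_le_of_ne (S.le_max' y hyS) hyM
    have hg : g < |y - M| := hp y hyS M hM hyM
    rw [abs_sub_comm, abs_of_pos (by linarith)] at hg
    refine ⟨x, Finset.mem_of_mem_erase hx, M, hM, ?_⟩
    push_cast
    nlinarith

/-- pairwise cos bound inside unit disk -/
lemma udg_cos_lt_half (z w : ℂ) (hz : ‖z‖ ≤ 1) (hw : ‖w‖ ≤ 1)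
    (hd : 1 < ‖z - w‖) (hz0 : z ≠ 0) (hw0 : w ≠ 0) :
    Real.cos (z.arg - w.arg) < 1/2 := by
  have hzp : (0:ℝ) < ‖z‖ := norm_pos_iff.mpr hz0
  have hwp : (0:ℝ) < ‖w‖ := norm_pos_iff.mpr hw0
  have hz2 : ‖z‖ ^ 2 = z.re^2 + z.im^2 := by
    rw [Complex.sq_norm, Complex.normSq_apply]; ring
  have hw2 : ‖w‖ ^ 2 = w.re^2 + w.im^2 := by
    rw [Complex.sq_norm, Complex.normSq_apply]; ring
  have hd2 : 1 < (z.re - w.re)^2 + (z.im - w.im)^2 := by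
    have : ‖z-w‖ ^ 2 = (z.re - w.re)^2 + (z.im - w.im)^2 := by
      rw [Complex.sq_norm, Complex.normSq_apply]; simp [Complex.sub_re, Complex.sub_im]; ring
    nlinarith [norm_nonneg (z-w)]
  rw [udg_cos_arg_sub z w hz0 hw0, div_lt_iff₀ (by positivity)]
  nlinarith [sq_nonneg (‖z‖ - ‖w‖), sq_nonneg (‖z‖ + ‖w‖)]


lemma udg_arg_abs_le (z : ℂ) : |z.arg| ≤ π :=
  abs_le.mpr ⟨(Complex.neg_pi_lt_arg z).le, Complex.arg_le_pi z⟩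

lemma udg_arg_sub_abs_lt (z w : ℂ) : |z.arg - w.arg| < 2*π := by
  have h1 := Complex.neg_pi_lt_arg z
  have h1' := Complex.arg_le_pi z
  have h2 := Complex.neg_pi_lt_arg w
  have h2' := Complex.arg_le_pi w
  rw [abs_sub_lt_iff]
  constructor <;> linarith

lemma udg_disk (c : ℂ) (T : Finset ℂ) (hT : ∀ p ∈ T, ‖p - c‖ ≤ 1)
    (hpair : ∀ p ∈ T, ∀ q ∈ T, p ≠ q → 1 < ‖p - q‖) : T.card ≤ 5 := by
  have hpi := Real.pi_pos
  by_cases hc : c ∈ T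
  · have hsub : T ⊆ {c} := by
      intro p hp
      simp only [Finset.mem_singleton]
      by_contra hpc
      have h1 := hpair p hp c hc hpc
      have h2 := hT p hp
      linarith
    calc T.card ≤ 1 := by simpa using Finset.card_le_card hsub
      _ ≤ 5 := by norm_num
  · by_contra h6
    push_neg at h6
    have h6' : 6 ≤ T.card := h6
    have hz0 : ∀ p ∈ T, p - c ≠ 0 := by
      intro p hp
      exact sub_ne_zero.mpr (fun h => hc (h ▸ hp))
    have hcos : ∀ p ∈ T, ∀ q ∈ T, p ≠ q →
        Real.cos ((p - c).arg - (q - c).arg) < 1/2 := by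
      intro p hp q hq hpq
      apply udg_cos_lt_half _ _ (hT p hp) (hT q hq) _ (hz0 p hp) (hz0 q hq)
      have h : (p - c) - (q - c) = p - q := by ring
      rw [h]
      exact hpair p hp q hq hpq
    set f : ℂ → ℝ := fun p => (p - c).arg with hf
    have hinj : Set.InjOn f T := by
      intro p hp q hq hfeq
      by_contra hpq
      have := hcos p hp q hq hpq
      simp only [hf] at hfeq
      rw [hfeq, sub_self, Real.cos_zero] at this
      norm_num at this
    set A := T.image f with hA
    have hAcard : A.card = T.card := Finset.card_image_of_injOn hinj
    have hgap : ∀ x ∈ A, ∀ y ∈ A, x ≠ y → π/3 < |x - y| := by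
      intro x hx y hy hxy
      obtain ⟨p, hp, rfl⟩ := Finset.mem_image.mp hx
      obtain ⟨q, hq, rfl⟩ := Finset.mem_image.mp hy
      have hpq : p ≠ q := fun h => hxy (by rw [h])
      exact (udg_angle_of_cos_lt _ (udg_arg_sub_abs_lt _ _) (hcos p hp q hq hpq)).1
    obtain ⟨x, hx, y, hy, hxy⟩ := udg_exists_gap (π/3) 5 A (by omega) hgap
    have hxyne : x ≠ y := by
      intro h
      rw [h, sub_self] at hxy
      push_cast at hxy
      nlinarith
    obtain ⟨p, hp, rfl⟩ := Finset.mem_image.mp hx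
    obtain ⟨q, hq, rfl⟩ := Finset.mem_image.mp hy
    have hpq : p ≠ q := fun h => hxyne (by rw [h])
    have hwide := (udg_angle_of_cos_lt _ (udg_arg_sub_abs_lt (q-c) (p-c))
      (hcos q hq p hp hpq.symm)).2
    have hle : f q - f p ≤ |(q-c).arg - (p-c).arg| := by
      simp only [hf]; exact le_abs_self _
    push_cast at hxy
    simp only [hf] at *
    linarith

lemma udg_lune (c c' : ℂ) (hne : c ≠ c') (hcc : ‖c - c'‖ ≤ 1) (T : Finset ℂ)
    (hT1 : ∀ p ∈ T, ‖p - c‖ ≤ 1) (hT2 : ∀ p ∈ T, 1 < ‖p - c'‖)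
    (hpair : ∀ p ∈ T, ∀ q ∈ T, p ≠ q → 1 < ‖p - q‖) : T.card ≤ 4 := by
  have hpi := Real.pi_pos
  have hv0 : c - c' ≠ 0 := sub_ne_zero.mpr hne
  have hcv0 : (starRingEnd ℂ) (c - c') ≠ 0 := star_ne_zero.mpr hv0
  have hz0 : ∀ p ∈ T, p - c ≠ 0 := by
    intro p hp h
    have hpc : p = c := sub_eq_zero.mp h
    have := hT2 p hp
    rw [hpc] at this
    linarith
  by_contra h5
  push_neg at h5
  have h5' : 5 ≤ T.card := h5
  set f : ℂ → ℝ := fun p => ((p - c) * (starRingEnd ℂ) (c - c')).arg with hf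
  have hprod0 : ∀ p ∈ T, (p - c) * (starRingEnd ℂ) (c - c') ≠ 0 :=
    fun p hp => mul_ne_zero (hz0 p hp) hcv0
  have hrange : ∀ p ∈ T, |f p| < 2*π/3 := by
    intro p hp
    apply udg_angle_of_neg_half_lt _ (udg_arg_abs_le _)
    rw [Complex.cos_arg (hprod0 p hp)]
    have habs : ‖(p - c) * (starRingEnd ℂ) (c - c')‖
        = ‖p - c‖ * ‖c - c'‖ := by
      rw [norm_mul, Complex.norm_conj]
    have hre : ((p - c) * (starRingEnd ℂ) (c - c')).re
        = (p - c).re * (c - c').re + (p - c).im * (c - c').im := by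
      simp only [Complex.mul_re, Complex.conj_re, Complex.conj_im]
      ring
    have hr2 : ‖p - c‖ ^ 2 = (p - c).re^2 + (p - c).im^2 := by
      rw [Complex.sq_norm, Complex.normSq_apply]; ring
    have hs2 : ‖c - c'‖ ^ 2 = (c - c').re^2 + (c - c').im^2 := by
      rw [Complex.sq_norm, Complex.normSq_apply]; ring
    have hrp : (0:ℝ) < ‖p - c‖ := norm_pos_iff.mpr (hz0 p hp)
    have hsp : (0:ℝ) < ‖c - c'‖ := norm_pos_iff.mpr hv0
    have hfar : 1 < ‖(p - c) + (c - c')‖ := by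
      have h : (p - c) + (c - c') = p - c' := by ring
      rw [h]; exact hT2 p hp
    have hfar2 : 1 < ((p - c).re + (c - c').re)^2 + ((p - c).im + (c - c').im)^2 := by
      have h2 : ‖(p - c) + (c - c')‖ ^ 2
          = ((p - c).re + (c - c').re)^2 + ((p - c).im + (c - c').im)^2 := by
        rw [Complex.sq_norm, Complex.normSq_apply]
        simp only [Complex.add_re, Complex.add_im]
        ring
      nlinarith [norm_nonneg ((p - c) + (c - c'))]
    rw [habs, hre, lt_div_iff₀ (by positivity)]
    nlinarith [hT1 p hp, hcc, hrp.le, hsp.le]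
  have hcos : ∀ p ∈ T, ∀ q ∈ T, p ≠ q → Real.cos (f p - f q) < 1/2 := by
    intro p hp q hq hpq
    have heq := udg_cos_arg_mul (p - c) (q - c) ((starRingEnd ℂ) (c - c'))
      (hz0 p hp) (hz0 q hq) hcv0
    simp only [hf]
    rw [heq]
    apply udg_cos_lt_half _ _ (hT1 p hp) (hT1 q hq) _ (hz0 p hp) (hz0 q hq)
    have h : (p - c) - (q - c) = p - q := by ring
    rw [h]
    exact hpair p hp q hq hpq
  have hinj : Set.InjOn f T := by
    intro p hp q hq hfeq
    by_contra hpq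
    have := hcos p hp q hq hpq
    rw [hfeq, sub_self, Real.cos_zero] at this
    norm_num at this
  set A := T.image f with hA
  have hAcard : A.card = T.card := Finset.card_image_of_injOn hinj
  have hgap : ∀ x ∈ A, ∀ y ∈ A, x ≠ y → π/3 < |x - y| := by
    intro x hx y hy hxy
    obtain ⟨p, hp, rfl⟩ := Finset.mem_image.mp hx
    obtain ⟨q, hq, rfl⟩ := Finset.mem_image.mp hy
    have hpq : p ≠ q := fun h => hxy (by rw [h])
    have habs : |f p - f q| < 2*π := by
      have h1 := hrange p hp
      have h2 := hrange q hq
      rw [abs_lt] at h1 h2 ⊢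
      constructor <;> linarith
    exact (udg_angle_of_cos_lt _ habs (hcos p hp q hq hpq)).1
  obtain ⟨x, hx, y, hy, hxy⟩ := udg_exists_gap (π/3) 4 A (by omega) hgap
  obtain ⟨p, hp, rfl⟩ := Finset.mem_image.mp hx
  obtain ⟨q, hq, rfl⟩ := Finset.mem_image.mp hy
  have h1 := hrange p hp
  have h2 := hrange q hq
  rw [abs_lt] at h1 h2
  push_cast at hxy
  linarith


noncomputable def udgPhi (p : EuclideanSpace ℝ (Fin 2)) : ℂ := ⟨p 0, p 1⟩

lemma udgPhi_dist (x y : EuclideanSpace ℝ (Fin 2)) :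
    ‖udgPhi x - udgPhi y‖ = dist x y := by
  rw [EuclideanSpace.dist_eq]
  rw [← Complex.dist_eq, Complex.dist_eq_re_im]
  simp only [udgPhi, Fin.sum_univ_two]
  norm_num [Real.dist_eq, sq_abs]

lemma udgPhi_inj : Function.Injective udgPhi := by
  intro x y h
  ext i
  fin_cases i
  · exact congrArg Complex.re h
  · exact congrArg Complex.im h

lemma udg_walk_cross {α : Type*} {H : SimpleGraph α} (Q : α → Prop) :
    ∀ {a b : α}, H.Walk a b → Q a → ¬ Q b →
    ∃ x y : α, Q x ∧ ¬ Q y ∧ H.Adj x y := by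
  intro a b w
  induction w with
  | nil => intro h h'; exact absurd h h'
  | @cons u v _ h p ih =>
    intro ha hb
    by_cases hq : Q v
    · exact ih hq hb
    · exact ⟨u, v, ha, hq, h⟩





/-- The unit disk graph on a finite set `P` of points in the Euclidean plane: two distinct
points of `P` are adjacent iff their Euclidean distance is at most `1`. -/
def unitDiskGraph (P : Finset (EuclideanSpace ℝ (Fin 2))) :
    SimpleGraph {p // p ∈ P} where
  Adj a b := a ≠ b ∧ dist (a : EuclideanSpace ℝ (Fin 2)) (b : EuclideanSpace ℝ (Fin 2)) ≤ 1
  symm := by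
    constructor
    rintro a b ⟨hne, hd⟩
    exact ⟨hne.symm, by rwa [dist_comm]⟩
  loopless := by
    constructor
    rintro a ⟨hne, _⟩
    exact hne rfl

/-- If `D` is a nonempty connected dominating set of the unit disk graph on a
nonempty finite set `P` of points of the plane, and `W` is an independent set, then
`|W| ≤ 4|D| + 1`. -/
theorem indep_le_four_cds_add_one (P : Finset (EuclideanSpace ℝ (Fin 2))) (hP : P.Nonempty)
    (D W : Finset {p // p ∈ P}) (hDne : D.Nonempty)
    (hdom : ∀ v : {p // p ∈ P}, v ∉ D → ∃ d ∈ D, (unitDiskGraph P).Adj v d)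
    (hconn : ((unitDiskGraph P).induce (↑D : Set {p // p ∈ P})).Connected)
    (hW : ∀ a ∈ W, ∀ b ∈ W, ¬ (unitDiskGraph P).Adj a b) :
    W.card ≤ 4 * D.card + 1 := by
  classical
  let pts : {p // p ∈ P} → ℂ := fun v => udgPhi v.1
  have hpts_dist : ∀ a b : {p // p ∈ P}, ‖pts a - pts b‖
      = dist (a : EuclideanSpace ℝ (Fin 2)) (b : EuclideanSpace ℝ (Fin 2)) :=
    fun a b => udgPhi_dist _ _
  have hpts_inj : Function.Injective pts := fun a b h => Subtype.ext (udgPhi_inj h)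
  have hWd : ∀ a ∈ W, ∀ b ∈ W, a ≠ b →
      1 < dist (a : EuclideanSpace ℝ (Fin 2)) (b : EuclideanSpace ℝ (Fin 2)) := by
    intro a ha b hb hab
    by_contra hle
    push_neg at hle
    exact hW a ha b hb ⟨hab, hle⟩
  let C : Finset {p // p ∈ P} → Finset {p // p ∈ P} := fun S =>
    W.filter (fun w => ∃ d ∈ S, dist (w : EuclideanSpace ℝ (Fin 2)) (d : EuclideanSpace ℝ (Fin 2)) ≤ 1)
  have hCmem : ∀ S (w : {p // p ∈ P}), w ∈ C S ↔ (w ∈ W ∧ ∃ d ∈ S,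
      dist (w : EuclideanSpace ℝ (Fin 2)) (d : EuclideanSpace ℝ (Fin 2)) ≤ 1) := by
    intro S w
    simp [C, Finset.mem_filter]
  -- image card
  have himg : ∀ (S : Finset {p // p ∈ P}), (S.image pts).card = S.card :=
    fun S => Finset.card_image_of_injective S hpts_inj
  -- disk bound
  have hdisk : ∀ d : {p // p ∈ P}, (C {d}).card ≤ 5 := by
    intro d
    rw [← himg (C {d})]
    apply udg_disk (pts d)
    · intro p hp
      obtain ⟨w, hw, rfl⟩ := Finset.mem_image.mp hp
      obtain ⟨hwW, e, he, hdist⟩ := (hCmem _ w).mp hw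
      rw [Finset.mem_singleton] at he
      subst he
      rw [hpts_dist]
      exact hdist
    · intro p hp q hq hpq
      obtain ⟨w1, hw1, rfl⟩ := Finset.mem_image.mp hp
      obtain ⟨w2, hw2, rfl⟩ := Finset.mem_image.mp hq
      have hne : w1 ≠ w2 := fun h => hpq (by rw [h])
      rw [hpts_dist]
      exact hWd w1 ((hCmem _ w1).mp hw1).1 w2 ((hCmem _ w2).mp hw2).1 hne
  -- step bound
  have hstep : ∀ (S : Finset {p // p ∈ P}) (x y : {p // p ∈ P}), x ∈ S → x ≠ y →
      dist (x : EuclideanSpace ℝ (Fin 2)) (y : EuclideanSpace ℝ (Fin 2)) ≤ 1 →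
      (C (insert y S)).card ≤ (C S).card + 4 := by
    intro S x y hxS hxy hdxy
    have hsub : C (insert y S) ⊆ C S ∪ (C (insert y S) \ C S) := by
      intro w hw
      rw [Finset.mem_union, Finset.mem_sdiff]
      by_cases h : w ∈ C S
      · exact Or.inl h
      · exact Or.inr ⟨hw, h⟩
    have hN : (C (insert y S) \ C S).card ≤ 4 := by
      rw [← himg (C (insert y S) \ C S)]
      have hmemN : ∀ w ∈ C (insert y S) \ C S, w ∈ W ∧
          dist (w : EuclideanSpace ℝ (Fin 2)) (y : EuclideanSpace ℝ (Fin 2)) ≤ 1 ∧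
          ∀ d ∈ S, ¬ dist (w : EuclideanSpace ℝ (Fin 2)) (d : EuclideanSpace ℝ (Fin 2)) ≤ 1 := by
        intro w hw
        rw [Finset.mem_sdiff] at hw
        obtain ⟨hw1, hw2⟩ := hw
        obtain ⟨hwW, e, he, hdist⟩ := (hCmem _ w).mp hw1
        have hnot : ∀ d ∈ S, ¬ dist (w : EuclideanSpace ℝ (Fin 2)) (d : EuclideanSpace ℝ (Fin 2)) ≤ 1 := by
          intro d hd hcon
          exact hw2 ((hCmem _ w).mpr ⟨hwW, d, hd, hcon⟩)
        refine ⟨hwW, ?_, hnot⟩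
        rw [Finset.mem_insert] at he
        rcases he with rfl | he
        · exact hdist
        · exact absurd hdist (hnot e he)
      apply udg_lune (pts y) (pts x)
      · exact fun h => hxy (hpts_inj h).symm
      · rw [hpts_dist, dist_comm]; exact hdxy
      · intro p hp
        obtain ⟨w, hw, rfl⟩ := Finset.mem_image.mp hp
        rw [hpts_dist]
        exact (hmemN w hw).2.1
      · intro p hp
        obtain ⟨w, hw, rfl⟩ := Finset.mem_image.mp hp
        rw [hpts_dist]
        have := (hmemN w hw).2.2 x hxS
        push_neg at this
        exact this
      · intro p hp q hq hpq
        obtain ⟨w1, hw1, rfl⟩ := Finset.mem_image.mp hp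
        obtain ⟨w2, hw2, rfl⟩ := Finset.mem_image.mp hq
        have hne : w1 ≠ w2 := fun h => hpq (by rw [h])
        rw [hpts_dist]
        exact hWd w1 (hmemN w1 hw1).1 w2 (hmemN w2 hw2).1 hne
    calc (C (insert y S)).card ≤ (C S ∪ (C (insert y S) \ C S)).card :=
          Finset.card_le_card hsub
      _ ≤ (C S).card + (C (insert y S) \ C S).card := Finset.card_union_le _ _
      _ ≤ (C S).card + 4 := by omega
  -- crossing edge
  have hcross : ∀ S : Finset {p // p ∈ P}, S ⊆ D → S.Nonempty → S ≠ D →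
      ∃ x ∈ S, ∃ y ∈ D, y ∉ S ∧ x ≠ y ∧
        dist (x : EuclideanSpace ℝ (Fin 2)) (y : EuclideanSpace ℝ (Fin 2)) ≤ 1 := by
    intro S hSD hSne hSneD
    obtain ⟨a, haS⟩ := hSne
    obtain ⟨b, hbD, hbS⟩ := Finset.exists_of_ssubset (lt_of_le_of_ne hSD hSneD)
    have haD : a ∈ D := hSD haS
    let av : ↥(↑D : Set {p // p ∈ P}) := ⟨a, by simpa using haD⟩
    let bv : ↥(↑D : Set {p // p ∈ P}) := ⟨b, by simpa using hbD⟩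
    obtain ⟨wlk⟩ := hconn.preconnected av bv
    obtain ⟨x, y, hxQ, hyQ, hadj⟩ :=
      udg_walk_cross (fun z : ↥(↑D : Set {p // p ∈ P}) => z.1 ∈ S) wlk haS hbS
    have hadj' : (unitDiskGraph P).Adj x.1 y.1 := hadj
    obtain ⟨hne, hdist⟩ := hadj'
    have hyD : y.1 ∈ D := by simpa using y.2
    exact ⟨x.1, hxQ, y.1, hyD, hyQ, hne, hdist⟩
  -- main induction
  have key : ∀ n : ℕ, n + 1 ≤ D.card →
      ∃ S : Finset {p // p ∈ P}, S ⊆ D ∧ S.card = n + 1 ∧ (C S).card ≤ 4 * (n + 1) + 1 := by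
    intro n
    induction n with
    | zero =>
      intro _
      obtain ⟨d, hd⟩ := hDne
      exact ⟨{d}, Finset.singleton_subset_iff.mpr hd, Finset.card_singleton d,
        by simpa using hdisk d⟩
    | succ n ih =>
      intro hcard
      obtain ⟨S, hSD, hScard, hCS⟩ := ih (by omega)
      have hSne : S.Nonempty := Finset.card_pos.mp (by omega)
      have hSneD : S ≠ D := by
        intro h
        rw [h] at hScard
        omega
      obtain ⟨x, hxS, y, hyD, hyS, hxy, hdxy⟩ := hcross S hSD hSne hSneD
      refine ⟨insert y S, Finset.insert_subset hyD hSD, ?_, ?_⟩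
      · rw [Finset.card_insert_of_notMem hyS, hScard]
      · have := hstep S x y hxS hxy hdxy
        omega
  -- conclude
  have hD1 : 1 ≤ D.card := Finset.card_pos.mpr hDne
  obtain ⟨S, hSD, hScard, hCS⟩ := key (D.card - 1) (by omega)
  have hSeq : S = D := Finset.eq_of_subset_of_card_le hSD (by omega)
  subst hSeq
  have hWC : W.card ≤ (C S).card := by
    apply Finset.card_le_card
    intro w hw
    rw [hCmem]
    refine ⟨hw, ?_⟩
    by_cases hwD : w ∈ S
    · exact ⟨w, hwD, by simp⟩
    · obtain ⟨d, hd, hadj⟩ := hdom w hwD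
      exact ⟨d, hd, hadj.2⟩
  omega
end

section
/- Let G_r be a pendant-augmented unit disk graph on a nonempty finite set P of points in ℝ² with pendants at a subset P₀ ⊆ P. If OPT is a nonempty connected dominating set of G_r and W is an independent set of G_r, then |W| ≤ 5·|OPT| + 1. (Paper's Lemma 1: any maximal independent set of G_r has size at most 5|OPT| + 1, where OPT is a minimum connected dominating set of G_r.) -/
open Real Finset

private lemma cos_ge_of_le (d : ℝ) (h0 : 0 < d) (h1 : d ≤ π/3) : 1/2 ≤ Real.cos d := by
  rw [← Real.cos_pi_div_three]
  apply Real.cos_le_cos_of_nonneg_of_le_pi h0.le (by linarith [Real.pi_pos]) h1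

private lemma gap_gt (d : ℝ) (h0 : 0 < d) (hc : Real.cos d < 1/2) : π/3 < d := by
  by_contra h
  exact absurd (cos_ge_of_le d h0 (le_of_not_gt h)) (not_le.mpr hc)

private lemma cos_ge_of_big (d : ℝ) (h0 : 5*π/3 ≤ d) (h1 : d < 2*π) : 1/2 ≤ Real.cos d := by
  rw [← Real.cos_two_pi_sub]
  exact cos_ge_of_le _ (by linarith) (by linarith)

private lemma maxmin_ge : ∀ n : ℕ, ∀ A : Finset ℝ, A.card = n + 1 →
    (∀ a ∈ A, a ∈ Set.Ioc (-π) π) →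
    (∀ a ∈ A, ∀ b ∈ A, a ≠ b → Real.cos (a - b) < 1/2) →
    ∀ (hA : A.Nonempty), (n : ℝ) * (π/3) ≤ A.max' hA - A.min' hA := by
  intro n
  induction n with
  | zero =>
    intro A hcard _ _ hA
    simp only [Nat.cast_zero, zero_mul]
    have : A.min' hA ≤ A.max' hA := A.min'_le _ (A.max'_mem hA)
    linarith
  | succ n ih =>
    intro A hcard hIoc hpair hA
    have h2 : 1 < A.card := by omega
    set M := A.max' hA with hM
    set A' := A.erase M with hA'
    have hMmem : M ∈ A := A.max'_mem hA
    have hA'card : A'.card = n + 1 := by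
      rw [hA', Finset.card_erase_of_mem hMmem, hcard]; omega
    have hA'ne : A'.Nonempty := Finset.card_pos.mp (by omega)
    have hsub : A' ⊆ A := Finset.erase_subset _ _
    have ihA := ih A' hA'card (fun a ha => hIoc a (hsub ha))
      (fun a ha b hb => hpair a (hsub ha) b (hsub hb)) hA'ne
    set M' := A'.max' hA'ne with hM'
    have hM'mem : M' ∈ A := hsub (A'.max'_mem hA'ne)
    have hM'ne : M' ≠ M := (Finset.mem_erase.mp (A'.max'_mem hA'ne)).1
    have hM'lt : M' < M := lt_of_le_of_ne (A.le_max' _ hM'mem) hM'ne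
    have hgap : π/3 < M - M' := by
      apply gap_gt _ (by linarith)
      exact hpair M hMmem M' hM'mem (Ne.symm hM'ne)
    have hminle : A.min' hA ≤ A'.min' hA'ne :=
      A.min'_le _ (hsub (A'.min'_mem hA'ne))
    push_cast
    linarith

/-- At most 5 points in the punctured closed unit disk, pairwise more than 1 apart. -/
private lemma key_packing (T : Finset ℂ) (hT : ∀ z ∈ T, z ≠ 0 ∧ ‖z‖ ≤ 1)
    (hpair : ∀ z ∈ T, ∀ w ∈ T, z ≠ w → 1 < dist z w) : T.card ≤ 5 := by
  -- cos of arg difference < 1/2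
  have hcos : ∀ z ∈ T, ∀ w ∈ T, z ≠ w → Real.cos (Complex.arg z - Complex.arg w) < 1/2 := by
    intro z hz w hw hzw
    obtain ⟨hz0, hz1⟩ := hT z hz
    obtain ⟨hw0, hw1⟩ := hT w hw
    have hd := hpair z hz w hw hzw
    have hcossub : Real.cos (Complex.arg z - Complex.arg w)
        = (z.re * w.re + z.im * w.im) / (‖z‖ * ‖w‖) := by
      rw [Real.cos_sub, Complex.cos_arg hz0, Complex.cos_arg hw0, Complex.sin_arg,
        Complex.sin_arg]
      field_simp
    rw [hcossub]
    have haz : 0 < ‖z‖ := norm_pos_iff.mpr hz0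
    have haw : 0 < ‖w‖ := norm_pos_iff.mpr hw0
    rw [div_lt_iff₀ (by positivity)]
    have hsq : ‖z‖ ^ 2 = z.re^2 + z.im^2 := by
      rw [Complex.sq_norm, Complex.normSq_apply]; ring
    have hsqw : ‖w‖ ^ 2 = w.re^2 + w.im^2 := by
      rw [Complex.sq_norm, Complex.normSq_apply]; ring
    have hdist : dist z w ^ 2 = (z.re - w.re)^2 + (z.im - w.im)^2 := by
      rw [Complex.dist_eq_re_im, Real.sq_sqrt (by positivity)]
    have hd2 : 1 < dist z w ^ 2 := by nlinarith [dist_nonneg (x := z) (y := w)]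
    rw [hdist] at hd2
    nlinarith [mul_nonneg ((sub_nonneg.mpr hz1)) (sub_nonneg.mpr (by linarith : ‖z‖ + 1 - ‖w‖ ≥ 0)),
      mul_nonneg haw.le (sub_nonneg.mpr hw1)]
  by_contra hcard
  push_neg at hcard
  -- image under arg
  have hinj : Set.InjOn Complex.arg T := by
    intro z hz w hw he
    by_contra hne
    have := hcos z hz w hw hne
    rw [he, sub_self, Real.cos_zero] at this
    linarith
  set A := T.image Complex.arg with hA
  have hAcard : A.card = T.card := Finset.card_image_of_injOn hinj
  have hAIoc : ∀ a ∈ A, a ∈ Set.Ioc (-π) π := by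
    intro a ha
    obtain ⟨z, hz, rfl⟩ := Finset.mem_image.mp ha
    exact Complex.arg_mem_Ioc z
  have hApair : ∀ a ∈ A, ∀ b ∈ A, a ≠ b → Real.cos (a - b) < 1/2 := by
    intro a ha b hb hab
    obtain ⟨z, hz, rfl⟩ := Finset.mem_image.mp ha
    obtain ⟨w, hw, rfl⟩ := Finset.mem_image.mp hb
    exact hcos z hz w hw (fun h => hab (by rw [h]))
  have hAne : A.Nonempty := Finset.card_pos.mp (by omega)
  have h6 : 6 ≤ A.card := by omega
  obtain ⟨m, hm⟩ : ∃ m, A.card = (A.card - 1) + 1 := ⟨A.card - 1, by omega⟩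
  have hineq := maxmin_ge (A.card - 1) A (by omega) hAIoc hApair hAne
  have h5 : (5 : ℝ) * (π/3) ≤ (A.card - 1 : ℕ) * (π/3) := by
    have : (5:ℝ) ≤ ((A.card - 1 : ℕ) : ℝ) := by
      have : 5 ≤ A.card - 1 := by omega
      exact_mod_cast this
    have hpi : 0 < π/3 := by linarith [Real.pi_pos]
    nlinarith
  have hmaxmem := A.max'_mem hAne
  have hminmem := A.min'_mem hAne
  have hmaxIoc := hAIoc _ hmaxmem
  have hminIoc := hAIoc _ hminmem
  have hne : A.max' hAne ≠ A.min' hAne := by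
    have := Finset.min'_lt_max'_of_card A (by omega)
    exact this.ne'
  have hcosmm := hApair _ hmaxmem _ hminmem hne
  have : 1/2 ≤ Real.cos (A.max' hAne - A.min' hAne) := by
    apply cos_ge_of_big
    · linarith
    · obtain ⟨h1, h2⟩ := hmaxIoc; obtain ⟨h3, h4⟩ := hminIoc; linarith
  linarith

private noncomputable def e2c (x : EuclideanSpace ℝ (Fin 2)) : ℂ := ⟨x 0, x 1⟩

private lemma e2c_dist (x y : EuclideanSpace ℝ (Fin 2)) : dist (e2c x) (e2c y) = dist x y := by
  rw [Complex.dist_eq_re_im, EuclideanSpace.dist_eq]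
  simp [e2c, Fin.sum_univ_two, Real.dist_eq, sq_abs]

private lemma e2c_inj : Function.Injective e2c := by
  intro x y h
  have h0 : x 0 = y 0 := congrArg Complex.re h
  have h1 : x 1 = y 1 := congrArg Complex.im h
  ext i
  fin_cases i <;> assumption

/-- Packing in the Euclidean plane: at most 5 points within distance 1 of `c`, distinct
from `c`, pairwise more than 1 apart. -/
private lemma packing5 (c : EuclideanSpace ℝ (Fin 2)) (S : Finset (EuclideanSpace ℝ (Fin 2)))
    (hS : ∀ x ∈ S, x ≠ c ∧ dist x c ≤ 1)
    (hpair : ∀ x ∈ S, ∀ y ∈ S, x ≠ y → 1 < dist x y) : S.card ≤ 5 := by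
  set f : EuclideanSpace ℝ (Fin 2) → ℂ := fun x => e2c x - e2c c with hf
  have hfinj : Function.Injective f := fun a b h => e2c_inj (by simpa [hf] using sub_left_injective h)
  have := key_packing (S.image f) ?_ ?_
  · rwa [Finset.card_image_of_injective _ hfinj] at this
  · intro z hz
    obtain ⟨x, hx, rfl⟩ := Finset.mem_image.mp hz
    obtain ⟨hxc, hxd⟩ := hS x hx
    constructor
    · simp only [hf, sub_ne_zero]
      exact fun h => hxc (e2c_inj h)
    · show ‖_‖ ≤ 1
      rw [← Complex.dist_eq, e2c_dist]
      exact hxd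
  · intro z hz w hw hzw
    obtain ⟨x, hx, rfl⟩ := Finset.mem_image.mp hz
    obtain ⟨y, hy, rfl⟩ := Finset.mem_image.mp hw
    have hxy : x ≠ y := fun h => hzw (by rw [h])
    have : dist (f x) (f y) = dist x y := by
      simp only [hf]
      rw [dist_sub_right, e2c_dist]
    rw [this]
    exact hpair x hx y hy hxy

/-- Lune packing: at most 4 points within distance 1 of `c`, distinct from `c`,
pairwise more than 1 apart, all at distance more than 1 from a point `q` which
is itself within distance 1 of `c` and distinct from `c`. -/
private lemma packing4 (c q : EuclideanSpace ℝ (Fin 2)) (hq : q ≠ c) (hqd : dist q c ≤ 1)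
    (S : Finset (EuclideanSpace ℝ (Fin 2)))
    (hS : ∀ x ∈ S, x ≠ c ∧ dist x c ≤ 1 ∧ 1 < dist x q)
    (hpair : ∀ x ∈ S, ∀ y ∈ S, x ≠ y → 1 < dist x y) : S.card ≤ 4 := by
  classical
  have hqS : q ∉ S := by
    intro h
    have := (hS q h).2.2
    rw [dist_self] at this
    linarith
  have h5 := packing5 c (insert q S) ?_ ?_
  · rw [Finset.card_insert_of_notMem hqS] at h5
    omega
  · intro x hx
    rcases Finset.mem_insert.mp hx with rfl | hx
    · exact ⟨hq, hqd⟩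
    · exact ⟨(hS x hx).1, (hS x hx).2.1⟩
  · intro x hx y hy hxy
    rcases Finset.mem_insert.mp hx with hx' | hx' <;> rcases Finset.mem_insert.mp hy with hy' | hy'
    · exact absurd (hx'.trans hy'.symm) hxy
    · subst hx'; rw [dist_comm]; exact (hS y hy').2.2
    · subst hy'; exact (hS x hx').2.2
    · exact hpair x hx' y hy' hxy


/-- The pendant-augmented unit disk graph on a finite set `P` of points in the Euclidean
plane with pendants at `P₀ ⊆ P`: the vertex set is the disjoint union of `P` (the `Sum.inl`
vertices) and one dummy vertex `Sum.inr u` for each `u ∈ P₀`; two distinct points of `P` are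
adjacent iff their Euclidean distance is at most `1`; the dummy vertex of `u ∈ P₀` is adjacent
exactly to the point `u`; dummy vertices are pairwise nonadjacent. -/
def pendantUnitDiskGraph (P P₀ : Finset (EuclideanSpace ℝ (Fin 2))) :
    SimpleGraph ({p // p ∈ P} ⊕ {p // p ∈ P₀}) where
  Adj a b :=
    match a, b with
    | Sum.inl p, Sum.inl q =>
        p ≠ q ∧ dist (p : EuclideanSpace ℝ (Fin 2)) (q : EuclideanSpace ℝ (Fin 2)) ≤ 1
    | Sum.inl p, Sum.inr u => (p : EuclideanSpace ℝ (Fin 2)) = (u : EuclideanSpace ℝ (Fin 2))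
    | Sum.inr u, Sum.inl p => (p : EuclideanSpace ℝ (Fin 2)) = (u : EuclideanSpace ℝ (Fin 2))
    | Sum.inr _, Sum.inr _ => False
  symm := by
    constructor
    rintro (p | u) (q | w) h
    · exact ⟨h.1.symm, by rw [dist_comm]; exact h.2⟩
    · exact h
    · exact h
    · exact h
  loopless := by
    constructor
    rintro (p | u) h
    · exact h.1 rfl
    · exact h

section Graph

variable {P P₀ : Finset (EuclideanSpace ℝ (Fin 2))}

open scoped Classical

private lemma adj_ll {p q : {x // x ∈ P}} :
    (pendantUnitDiskGraph P P₀).Adj (Sum.inl p) (Sum.inl q) ↔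
      p ≠ q ∧ dist (p : EuclideanSpace ℝ (Fin 2)) (q : EuclideanSpace ℝ (Fin 2)) ≤ 1 :=
  Iff.rfl

private lemma adj_lr {p : {x // x ∈ P}} {u : {x // x ∈ P₀}} :
    (pendantUnitDiskGraph P P₀).Adj (Sum.inl p) (Sum.inr u) ↔
      (p : EuclideanSpace ℝ (Fin 2)) = (u : EuclideanSpace ℝ (Fin 2)) :=
  Iff.rfl

private lemma adj_rl {p : {x // x ∈ P}} {u : {x // x ∈ P₀}} :
    (pendantUnitDiskGraph P P₀).Adj (Sum.inr u) (Sum.inl p) ↔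
      (p : EuclideanSpace ℝ (Fin 2)) = (u : EuclideanSpace ℝ (Fin 2)) :=
  Iff.rfl

private lemma adj_rr {u w : {x // x ∈ P₀}} :
    ¬ (pendantUnitDiskGraph P P₀).Adj (Sum.inr u) (Sum.inr w) :=
  fun h => h

private lemma split_card {α β : Type*} (F : Finset (α ⊕ β)) (Fl : Finset α) (Fr : Finset β)
    (hl : ∀ a, Sum.inl a ∈ F → a ∈ Fl) (hr : ∀ b, Sum.inr b ∈ F → b ∈ Fr) :
    F.card ≤ Fl.card + Fr.card := by
  classical
  have hsub : F ⊆ Fl.image Sum.inl ∪ Fr.image Sum.inr := by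
    intro w hw
    rcases w with a | b
    · exact Finset.mem_union_left _ (Finset.mem_image.mpr ⟨a, hl a hw, rfl⟩)
    · exact Finset.mem_union_right _ (Finset.mem_image.mpr ⟨b, hr b hw, rfl⟩)
  calc F.card ≤ _ := Finset.card_le_card hsub
    _ ≤ _ := Finset.card_union_le _ _
    _ ≤ _ := by
        gcongr <;> exact Finset.card_image_le

private lemma pairwise_dist (W : Finset ({p // p ∈ P} ⊕ {p // p ∈ P₀}))
    (hW : ∀ a ∈ W, ∀ b ∈ W, ¬ (pendantUnitDiskGraph P P₀).Adj a b)
    {r r' : {x // x ∈ P}} (hr : Sum.inl r ∈ W) (hr' : Sum.inl r' ∈ W) (hne : r ≠ r') :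
    1 < dist (r : EuclideanSpace ℝ (Fin 2)) (r' : EuclideanSpace ℝ (Fin 2)) := by
  have h := hW _ hr _ hr'
  rw [adj_ll] at h
  push_neg at h
  exact h hne

private lemma bound6 (hP₀ : P₀ ⊆ P) (W : Finset ({p // p ∈ P} ⊕ {p // p ∈ P₀}))
    (hW : ∀ a ∈ W, ∀ b ∈ W, ¬ (pendantUnitDiskGraph P P₀).Adj a b)
    (v : {p // p ∈ P} ⊕ {p // p ∈ P₀}) :
    (W.filter (fun w => w = v ∨ (pendantUnitDiskGraph P P₀).Adj w v)).card ≤ 6 := by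
  classical
  set G := pendantUnitDiskGraph P P₀ with hG
  set F := W.filter (fun w => w = v ∨ G.Adj w v) with hF
  have hFW : F ⊆ W := Finset.filter_subset _ _
  rcases v with p | d
  · -- v = Sum.inl p
    set Fl := Finset.univ.filter (fun r : {x // x ∈ P} => Sum.inl r ∈ F) with hFl
    set Fr := Finset.univ.filter (fun s : {x // x ∈ P₀} => Sum.inr s ∈ F) with hFr
    have hsplit := split_card F Fl Fr
      (fun a ha => Finset.mem_filter.mpr ⟨Finset.mem_univ _, ha⟩)
      (fun b hb => Finset.mem_filter.mpr ⟨Finset.mem_univ _, hb⟩)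
    have hFrW : ∀ s ∈ Fr, (p : EuclideanSpace ℝ (Fin 2)) = (s : EuclideanSpace ℝ (Fin 2)) := by
      intro s hs
      have hs' := (Finset.mem_filter.mp hs).2
      rcases (Finset.mem_filter.mp hs').2 with h | h
      · exact absurd h (by simp)
      · exact h
    have hFr1 : Fr.card ≤ 1 := by
      apply Finset.card_le_one.mpr
      intro s hs s' hs'
      exact Subtype.ext ((hFrW s hs).symm.trans (hFrW s' hs'))
    have hmem : ∀ r ∈ Fl, (Sum.inl r : {x // x ∈ P} ⊕ {x // x ∈ P₀}) = Sum.inl p ∨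
        G.Adj (Sum.inl r) (Sum.inl p) := by
      intro r hr
      exact (Finset.mem_filter.mp ((Finset.mem_filter.mp hr).2)).2
    have hmemW : ∀ r ∈ Fl, Sum.inl r ∈ W := fun r hr => hFW (Finset.mem_filter.mp hr).2
    by_cases hp : p ∈ Fl
    · have hFl1 : Fl ⊆ {p} := by
        intro r hr
        rw [Finset.mem_singleton]
        by_contra hne
        rcases hmem r hr with h | h
        · exact hne (by injection h)
        · rw [adj_ll] at h
          have := pairwise_dist W hW (hmemW r hr) (hmemW p hp) hne
          linarith [h.2]
      have := Finset.card_le_card hFl1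
      simp only [Finset.card_singleton] at this
      omega
    · have hFl5 : Fl.card ≤ 5 := by
        have himg : (Fl.image (fun r : {x // x ∈ P} =>
            (r : EuclideanSpace ℝ (Fin 2)))).card = Fl.card :=
          Finset.card_image_of_injective _ Subtype.coe_injective
        rw [← himg]
        apply packing5 (p : EuclideanSpace ℝ (Fin 2))
        · intro x hx
          obtain ⟨r, hr, rfl⟩ := Finset.mem_image.mp hx
          have hrp : r ≠ p := fun h => hp (h ▸ hr)
          rcases hmem r hr with h | h
          · exact absurd (by injection h) hrp
          · rw [adj_ll] at h
            exact ⟨fun hc => hrp (Subtype.ext hc), h.2⟩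
        · intro x hx y hy hxy
          obtain ⟨r, hr, rfl⟩ := Finset.mem_image.mp hx
          obtain ⟨r', hr', rfl⟩ := Finset.mem_image.mp hy
          exact pairwise_dist W hW (hmemW r hr) (hmemW r' hr')
            (fun h => hxy (by rw [h]))
      omega
  · -- v = Sum.inr d
    have hsub : F ⊆ {Sum.inr d, Sum.inl ⟨(d : EuclideanSpace ℝ (Fin 2)), hP₀ d.2⟩} := by
      intro w hw
      rcases (Finset.mem_filter.mp hw).2 with h | h
      · subst h; exact Finset.mem_insert_self _ _
      · rcases w with r | s
        · rw [adj_lr] at h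
          apply Finset.mem_insert.mpr
          right
          rw [Finset.mem_singleton]
          congr 1
          exact Subtype.ext h
        · exact absurd h (adj_rr)
    calc F.card ≤ _ := Finset.card_le_card hsub
      _ ≤ 2 := Finset.card_insert_le _ _ |>.trans (by simp)
      _ ≤ 6 := by omega

private lemma bound5 (W : Finset ({p // p ∈ P} ⊕ {p // p ∈ P₀}))
    (hW : ∀ a ∈ W, ∀ b ∈ W, ¬ (pendantUnitDiskGraph P P₀).Adj a b)
    (u v : {p // p ∈ P} ⊕ {p // p ∈ P₀}) (huv : (pendantUnitDiskGraph P P₀).Adj u v) :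
    (W.filter (fun w => (w = v ∨ (pendantUnitDiskGraph P P₀).Adj w v) ∧
      ¬(w = u ∨ (pendantUnitDiskGraph P P₀).Adj w u))).card ≤ 5 := by
  classical
  set G := pendantUnitDiskGraph P P₀ with hG
  set F := W.filter (fun w => (w = v ∨ G.Adj w v) ∧ ¬(w = u ∨ G.Adj w u)) with hF
  have hFW : F ⊆ W := Finset.filter_subset _ _
  have hmemF : ∀ w ∈ F, (w = v ∨ G.Adj w v) ∧ ¬(w = u ∨ G.Adj w u) := by
    intro w hw; exact (Finset.mem_filter.mp hw).2
  rcases v with p | d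
  · -- v = Sum.inl p
    set Fl := Finset.univ.filter (fun r : {x // x ∈ P} => Sum.inl r ∈ F) with hFl
    set Fr := Finset.univ.filter (fun s : {x // x ∈ P₀} => Sum.inr s ∈ F) with hFr
    have hsplit := split_card F Fl Fr
      (fun a ha => Finset.mem_filter.mpr ⟨Finset.mem_univ _, ha⟩)
      (fun b hb => Finset.mem_filter.mpr ⟨Finset.mem_univ _, hb⟩)
    have hFrW : ∀ s ∈ Fr, (p : EuclideanSpace ℝ (Fin 2)) = (s : EuclideanSpace ℝ (Fin 2)) := by
      intro s hs
      have hs' := (Finset.mem_filter.mp hs).2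
      rcases (hmemF _ hs').1 with h | h
      · exact absurd h (by simp)
      · exact h
    have hFr1 : Fr.card ≤ 1 := by
      apply Finset.card_le_one.mpr
      intro s hs s' hs'
      exact Subtype.ext ((hFrW s hs).symm.trans (hFrW s' hs'))
    have hmemW : ∀ r ∈ Fl, Sum.inl r ∈ W := by
      intro r hr
      exact hFW (Finset.mem_filter.mp hr).2
    have hmem : ∀ r ∈ Fl, ((Sum.inl r : {x // x ∈ P} ⊕ {x // x ∈ P₀}) = Sum.inl p ∨
        G.Adj (Sum.inl r) (Sum.inl p)) ∧
        ¬((Sum.inl r : {x // x ∈ P} ⊕ {x // x ∈ P₀}) = u ∨ G.Adj (Sum.inl r) u) := by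
      intro r hr
      exact hmemF _ (Finset.mem_filter.mp hr).2
    rcases u with q | e
    · -- u = Sum.inl q
      rw [adj_ll] at huv
      have hFl4 : Fl.card ≤ 4 := by
        have hprop : ∀ r ∈ Fl, r ≠ p ∧
            dist (r : EuclideanSpace ℝ (Fin 2)) (p : EuclideanSpace ℝ (Fin 2)) ≤ 1 ∧
            1 < dist (r : EuclideanSpace ℝ (Fin 2)) (q : EuclideanSpace ℝ (Fin 2)) := by
          intro r hr
          obtain ⟨h1, h2⟩ := hmem r hr
          push_neg at h2
          obtain ⟨h2a, h2b⟩ := h2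
          rw [adj_ll] at h2b
          push_neg at h2b
          have hrq : r ≠ q := fun h => h2a (by rw [h])
          have hdrq : 1 < dist (r : EuclideanSpace ℝ (Fin 2)) (q : EuclideanSpace ℝ (Fin 2)) :=
            h2b hrq
          rcases h1 with h | h
          · -- r = p : then Adj (inl p) (inl q) holds, contradicting h2b
            exfalso
            have hrp : r = p := by injection h
            subst hrp
            rw [dist_comm] at hdrq
            linarith [huv.2]
          · rw [adj_ll] at h
            exact ⟨h.1, h.2, hdrq⟩
        have himg : (Fl.image (fun r : {x // x ∈ P} =>
            (r : EuclideanSpace ℝ (Fin 2)))).card = Fl.card :=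
          Finset.card_image_of_injective _ Subtype.coe_injective
        rw [← himg]
        apply packing4 (p : EuclideanSpace ℝ (Fin 2)) (q : EuclideanSpace ℝ (Fin 2))
        · exact fun h => huv.1 (Subtype.ext h)
        · exact huv.2
        · intro x hx
          obtain ⟨r, hr, rfl⟩ := Finset.mem_image.mp hx
          obtain ⟨h1, h2, h3⟩ := hprop r hr
          exact ⟨fun hc => h1 (Subtype.ext hc), h2, h3⟩
        · intro x hx y hy hxy
          obtain ⟨r, hr, rfl⟩ := Finset.mem_image.mp hx
          obtain ⟨r', hr', rfl⟩ := Finset.mem_image.mp hy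
          exact pairwise_dist W hW (hmemW r hr) (hmemW r' hr')
            (fun h => hxy (by rw [h]))
      omega
    · -- u = Sum.inr e, so ↑p = ↑e
      rw [adj_rl] at huv
      have hFr0 : Fr = ∅ := by
        rw [Finset.eq_empty_iff_forall_notMem]
        intro s hs
        have hs' := (Finset.mem_filter.mp hs).2
        have h2 := (hmemF _ hs').2
        have hps := hFrW s hs
        apply h2
        left
        congr 1
        exact Subtype.ext ((huv.symm.trans hps)).symm
      have hFl5 : Fl.card ≤ 5 := by
        have hprop : ∀ r ∈ Fl, r ≠ p ∧
            dist (r : EuclideanSpace ℝ (Fin 2)) (p : EuclideanSpace ℝ (Fin 2)) ≤ 1 := by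
          intro r hr
          obtain ⟨h1, h2⟩ := hmem r hr
          push_neg at h2
          have hrp : r ≠ p := by
            intro h
            subst h
            exact h2.2 (by rw [adj_lr]; exact huv)
          rcases h1 with h | h
          · exact absurd (by injection h) hrp
          · rw [adj_ll] at h
            exact ⟨hrp, h.2⟩
        have himg : (Fl.image (fun r : {x // x ∈ P} =>
            (r : EuclideanSpace ℝ (Fin 2)))).card = Fl.card :=
          Finset.card_image_of_injective _ Subtype.coe_injective
        rw [← himg]
        apply packing5 (p : EuclideanSpace ℝ (Fin 2))
        · intro x hx
          obtain ⟨r, hr, rfl⟩ := Finset.mem_image.mp hx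
          obtain ⟨h1, h2⟩ := hprop r hr
          exact ⟨fun hc => h1 (Subtype.ext hc), h2⟩
        · intro x hx y hy hxy
          obtain ⟨r, hr, rfl⟩ := Finset.mem_image.mp hx
          obtain ⟨r', hr', rfl⟩ := Finset.mem_image.mp hy
          exact pairwise_dist W hW (hmemW r hr) (hmemW r' hr')
            (fun h => hxy (by rw [h]))
      rw [hFr0] at hsplit
      simp only [Finset.card_empty, add_zero] at hsplit
      omega
  · -- v = Sum.inr d
    have hsub : F ⊆ ({Sum.inr d} : Finset _) ∪
        (Finset.univ.filter (fun r : {x // x ∈ P} =>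
          (r : EuclideanSpace ℝ (Fin 2)) = (d : EuclideanSpace ℝ (Fin 2)))).image Sum.inl := by
      intro w hw
      rcases (hmemF _ hw).1 with h | h
      · subst h; exact Finset.mem_union_left _ (Finset.mem_singleton_self _)
      · rcases w with r | s
        · rw [adj_lr] at h
          exact Finset.mem_union_right _ (Finset.mem_image.mpr
            ⟨r, Finset.mem_filter.mpr ⟨Finset.mem_univ _, h⟩, rfl⟩)
        · exact absurd h (adj_rr)
    have h1 : (Finset.univ.filter (fun r : {x // x ∈ P} =>
        (r : EuclideanSpace ℝ (Fin 2)) = (d : EuclideanSpace ℝ (Fin 2)))).card ≤ 1 := by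
      apply Finset.card_le_one.mpr
      intro a ha b hb
      exact Subtype.ext (((Finset.mem_filter.mp ha).2).trans ((Finset.mem_filter.mp hb).2).symm)
    calc F.card ≤ _ := Finset.card_le_card hsub
      _ ≤ _ := Finset.card_union_le _ _
      _ ≤ 1 + 1 := by
          gcongr
          · simp
          · exact Finset.card_image_le.trans h1
      _ ≤ 5 := by omega


end Graph

private lemma walk_cross {V' : Type*} {G : SimpleGraph V'} {S : Set V'} (t : Finset V') :
    ∀ {a b : S} (_ : (G.induce S).Walk a b), (a : V') ∈ t → (b : V') ∉ t →
      ∃ u ∈ t, ∃ v : S, (v : V') ∉ t ∧ G.Adj u (v : V') := by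
  intro a b w
  induction w with
  | nil => intro h1 h2; exact absurd h1 h2
  | @cons a c b hadj p ih =>
    intro ha hb
    by_cases hc : (c : V') ∈ t
    · exact ih hc hb
    · exact ⟨(a : V'), ha, c, hc, hadj⟩

private lemma crossing {V' : Type*} {G : SimpleGraph V'} {S : Set V'}
    (hconn : (G.induce S).Connected) {t : Finset V'} (hts : ∀ x ∈ t, x ∈ S)
    (htne : t.Nonempty) {y : V'} (hyS : y ∈ S) (hyt : y ∉ t) :
    ∃ u ∈ t, ∃ v : V', v ∈ S ∧ v ∉ t ∧ G.Adj u v := by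
  obtain ⟨x, hx⟩ := htne
  obtain ⟨w⟩ := hconn ⟨x, hts x hx⟩ ⟨y, hyS⟩
  obtain ⟨u, hu, v, hv, hadj⟩ := walk_cross t w hx hyt
  exact ⟨u, hu, v, v.2, hv, hadj⟩


/-- Paper's Lemma 1: If `OPT` is a nonempty connected dominating set of the
pendant-augmented unit disk graph `G_r` on a nonempty finite `P ⊆ ℝ²` with pendants at
`P₀ ⊆ P`, and `W` is an independent set of `G_r`, then `|W| ≤ 5|OPT| + 1`. -/
theorem indep_le_five_cds_add_one (P P₀ : Finset (EuclideanSpace ℝ (Fin 2)))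
    (hP : P.Nonempty) (hP₀ : P₀ ⊆ P)
    (OPT W : Finset ({p // p ∈ P} ⊕ {p // p ∈ P₀})) (hOPTne : OPT.Nonempty)
    (hdom : ∀ v : {p // p ∈ P} ⊕ {p // p ∈ P₀}, v ∉ OPT →
      ∃ d ∈ OPT, (pendantUnitDiskGraph P P₀).Adj v d)
    (hconn : ((pendantUnitDiskGraph P P₀).induce
      (↑OPT : Set ({p // p ∈ P} ⊕ {p // p ∈ P₀}))).Connected)
    (hW : ∀ a ∈ W, ∀ b ∈ W, ¬ (pendantUnitDiskGraph P P₀).Adj a b) :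
    W.card ≤ 5 * OPT.card + 1 := by

  classical
  set G := pendantUnitDiskGraph P P₀ with hG
  -- every vertex of W is in OPT or adjacent to OPT
  have hWfull : W.filter (fun w => w ∈ OPT ∨ ∃ d ∈ OPT, G.Adj w d) = W := by
    apply Finset.filter_true_of_mem
    intro w _
    by_cases hw : w ∈ OPT
    · exact Or.inl hw
    · exact Or.inr (hdom w hw)
  have main : ∀ k (t : Finset ({p // p ∈ P} ⊕ {p // p ∈ P₀})), (OPT \ t).card ≤ k →
      t ⊆ OPT → t.Nonempty →
      (W.filter (fun w => w ∈ t ∨ ∃ d ∈ t, G.Adj w d)).card ≤ 5 * t.card + 1 →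
      (W.filter (fun w => w ∈ OPT ∨ ∃ d ∈ OPT, G.Adj w d)).card ≤ 5 * OPT.card + 1 := by
    intro k
    induction k with
    | zero =>
      intro t hk hsub htne hchgt
      have hempty : OPT \ t = ∅ := Finset.card_eq_zero.mp (le_antisymm hk (Nat.zero_le _))
      have hOT : OPT ⊆ t := by
        intro x hx
        by_contra hxt
        exact absurd (Finset.mem_sdiff.mpr ⟨hx, hxt⟩) (by rw [hempty]; exact Finset.notMem_empty x)
      have ht : t = OPT := Finset.Subset.antisymm hsub hOT
      rwa [ht] at hchgt
    | succ k ih =>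
      intro t hk hsub htne hchgt
      by_cases hOT : OPT ⊆ t
      · have ht : t = OPT := Finset.Subset.antisymm hsub hOT
        rwa [ht] at hchgt
      · obtain ⟨y, hyO, hyt⟩ := Finset.not_subset.mp hOT
        obtain ⟨u, hut, v, hvO, hvt, huv⟩ := crossing hconn
          (fun x hx => Finset.mem_coe.mpr (hsub hx)) htne (Finset.mem_coe.mpr hyO) hyt
        have hvO' : v ∈ OPT := Finset.mem_coe.mp hvO
        have hnew : (W.filter (fun w => w ∈ insert v t ∨ ∃ d ∈ insert v t, G.Adj w d)).card ≤
            (W.filter (fun w => w ∈ t ∨ ∃ d ∈ t, G.Adj w d)).card + 5 := by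
          have hsub2 : W.filter (fun w => w ∈ insert v t ∨ ∃ d ∈ insert v t, G.Adj w d) ⊆
              (W.filter (fun w => w ∈ t ∨ ∃ d ∈ t, G.Adj w d)) ∪
              (W.filter (fun w => (w = v ∨ G.Adj w v) ∧ ¬(w = u ∨ G.Adj w u))) := by
            intro w hw
            obtain ⟨hwW, hcond⟩ := Finset.mem_filter.mp hw
            by_cases hold : w ∈ t ∨ ∃ d ∈ t, G.Adj w d
            · exact Finset.mem_union_left _ (Finset.mem_filter.mpr ⟨hwW, hold⟩)
            · apply Finset.mem_union_right
              apply Finset.mem_filter.mpr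
              refine ⟨hwW, ?_, ?_⟩
              · rcases hcond with h | ⟨d, hd, hadj⟩
                · rcases Finset.mem_insert.mp h with h | h
                  · exact Or.inl h
                  · exact absurd (Or.inl h) hold
                · rcases Finset.mem_insert.mp hd with h | h
                  · subst h; exact Or.inr hadj
                  · exact absurd (Or.inr ⟨d, h, hadj⟩) hold
              · intro hcon
                rcases hcon with h | h
                · exact hold (Or.inl (h ▸ hut))
                · exact hold (Or.inr ⟨u, hut, h⟩)
          calc (W.filter (fun w => w ∈ insert v t ∨ ∃ d ∈ insert v t, G.Adj w d)).card
              ≤ _ := Finset.card_le_card hsub2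
            _ ≤ _ := Finset.card_union_le _ _
            _ ≤ _ := by
                gcongr
                exact bound5 W hW u v huv
        apply ih (insert v t)
        · have hss : OPT \ insert v t ⊂ OPT \ t := by
            apply Finset.ssubset_iff_of_subset (Finset.sdiff_subset_sdiff
              (Finset.Subset.refl _) (Finset.subset_insert _ _)) |>.mpr
            exact ⟨v, Finset.mem_sdiff.mpr ⟨hvO', hvt⟩,
              fun hc => (Finset.mem_sdiff.mp hc).2 (Finset.mem_insert_self _ _)⟩
          have := Finset.card_lt_card hss
          omega
        · exact Finset.insert_subset hvO' hsub
        · exact ⟨v, Finset.mem_insert_self _ _⟩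
        · have hcard : (insert v t).card = t.card + 1 := Finset.card_insert_of_notMem hvt
          rw [hcard]
          omega
  -- base case: singleton
  obtain ⟨d, hd⟩ := hOPTne
  have hbase : (W.filter (fun w => w ∈ ({d} : Finset _) ∨
      ∃ d' ∈ ({d} : Finset _), G.Adj w d')).card ≤ 5 * ({d} : Finset _).card + 1 := by
    have heq : W.filter (fun w => w ∈ ({d} : Finset _) ∨ ∃ d' ∈ ({d} : Finset _), G.Adj w d')
        = W.filter (fun w => w = d ∨ G.Adj w d) := by
      apply Finset.filter_congr
      intro w _
      simp
    rw [heq, Finset.card_singleton, hG]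
    have := bound6 hP₀ W hW d
    omega
  have hfinal := main ((OPT \ {d}).card) {d} le_rfl
    (Finset.singleton_subset_iff.mpr hd) ⟨d, Finset.mem_singleton_self d⟩ hbase
  rw [hWfull] at hfinal
  exact hfinal
end

section
/- Let G_r be a pendant-augmented unit disk graph on a nonempty finite set P of points in ℝ² with pendants at a subset P₀ ⊆ P. Let D ⊆ P satisfy: (i) the subgraph of G_r induced by D is connected; (ii) every dummy vertex is adjacent to some vertex of D; and (iii) for every v ∈ D, either the subgraph of G_r induced by D ∖ {v} is disconnected, or some dummy vertex has no neighbor in D ∖ {v}. Then for every nonempty connected dominating set OPT of G_r, |D| ≤ 20·|OPT| + 4. (Paper's Theorem 3: the cardinality of the subset D computed by the Proposed algorithm is at most 20·OPT + 4, where OPT is the size of a minimum connected dominating set of G_r.) -/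
namespace UDGaux

open Finset

set_option linter.unusedSectionVars false

variable {V : Type*} [DecidableEq V]

def stepRel (G : SimpleGraph V) (s : Finset V) (u v : V) : Prop :=
  u ∈ s ∧ v ∈ s ∧ G.Adj u v

def reachIn (G : SimpleGraph V) (s : Finset V) (a b : V) : Prop :=
  Relation.ReflTransGen (stepRel G s) a b

def connIn (G : SimpleGraph V) (s : Finset V) : Prop :=
  ∀ a ∈ s, ∀ b ∈ s, reachIn G s a b

open Classical in
noncomputable def ncut (G : SimpleGraph V) (s : Finset V) : Finset V :=
  s.filter fun v => connIn G (s.erase v)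

variable {G : SimpleGraph V}

lemma mem_ncut {s : Finset V} {v : V} :
    v ∈ ncut G s ↔ v ∈ s ∧ connIn G (s.erase v) := by
  classical
  simp [ncut]

lemma stepRel_symm {s : Finset V} : Symmetric (stepRel G s) :=
  fun _ _ ⟨hu, hv, h⟩ => ⟨hv, hu, h.symm⟩

lemma reachIn_symm {s : Finset V} {a b : V} (h : reachIn G s a b) : reachIn G s b a :=
  by haveI : Std.Symm (stepRel G s) := ⟨fun _ _ h => stepRel_symm h⟩
     exact (inferInstance : Std.Symm (Relation.ReflTransGen (stepRel G s))).symm _ _ h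

lemma reachIn_trans {s : Finset V} {a b c : V} (h : reachIn G s a b)
    (h' : reachIn G s b c) : reachIn G s a c := h.trans h'

lemma reachIn_mono {s t : Finset V} (hst : s ⊆ t) {a b : V} (h : reachIn G s a b) :
    reachIn G t a b := by
  induction h with
  | refl => exact Relation.ReflTransGen.refl
  | tail _ hstep ih => exact ih.tail ⟨hst hstep.1, hst hstep.2.1, hstep.2.2⟩

lemma connIn_of_card_le_one {s : Finset V} (h : s.card ≤ 1) : connIn G s := by
  intro a ha b hb
  have : a = b := Finset.card_le_one.mp h a ha b hb
  exact this ▸ Relation.ReflTransGen.refl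

/-- Portal lemma, starting outside the closed region `X` whose only exit is `c`. -/
lemma portal_out {s X : Finset V} {c : V}
    (closed : ∀ x ∈ X, ∀ y ∈ s, y ∉ X → y ≠ c → ¬ G.Adj x y)
    {a b : V} (ha : a ∉ X) (h : reachIn G s a b) :
    (b ∉ X → reachIn G (s \ X) a b) ∧ (b ∈ X → reachIn G (s \ X) a c) := by
  induction h with
  | refl => exact ⟨fun _ => Relation.ReflTransGen.refl, fun hb => absurd hb ha⟩
  | @tail b' y _ hstep ih =>
    obtain ⟨hb', hy, hadj⟩ := hstep
    by_cases hbX : b' ∈ X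
    · by_cases hyX : y ∈ X
      · exact ⟨fun h' => absurd hyX h', fun _ => ih.2 hbX⟩
      · have hyc : y = c := by
          by_contra hne
          exact closed b' hbX y hy hyX hne hadj
        exact ⟨fun _ => hyc ▸ ih.2 hbX, fun h' => absurd h' hyX⟩
    · by_cases hyX : y ∈ X
      · have hbc : b' = c := by
          by_contra hne
          exact closed y hyX b' hb' hbX hne hadj.symm
        exact ⟨fun h' => absurd hyX h', fun _ => hbc ▸ ih.1 hbX⟩
      · exact ⟨fun _ => (ih.1 hbX).tail
          ⟨Finset.mem_sdiff.2 ⟨hb', hbX⟩, Finset.mem_sdiff.2 ⟨hy, hyX⟩, hadj⟩,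
          fun h' => absurd h' hyX⟩

/-- Portal lemma, starting inside the closed region `X` whose only exit is `c`. -/
lemma portal_in {s X : Finset V} {c : V}
    (closed : ∀ x ∈ X, ∀ y ∈ s, y ∉ X → y ≠ c → ¬ G.Adj x y)
    {a b : V} (ha : a ∈ X) (h : reachIn G s a b) :
    (b ∈ X → reachIn G (insert c X) a b) ∧ (b ∉ X → reachIn G (insert c X) a c) := by
  induction h with
  | refl => exact ⟨fun _ => Relation.ReflTransGen.refl, fun h' => absurd ha h'⟩
  | @tail b' y _ hstep ih =>
    obtain ⟨hb', hy, hadj⟩ := hstep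
    by_cases hbX : b' ∈ X
    · by_cases hyX : y ∈ X
      · exact ⟨fun _ => (ih.1 hbX).tail
          ⟨Finset.mem_insert_of_mem hbX, Finset.mem_insert_of_mem hyX, hadj⟩,
          fun h' => absurd hyX h'⟩
      · have hyc : y = c := by
          by_contra hne
          exact closed b' hbX y hy hyX hne hadj
        refine ⟨fun h' => absurd h' hyX, fun _ => (ih.1 hbX).tail
          ⟨Finset.mem_insert_of_mem hbX, Finset.mem_insert_self _ _, hyc ▸ hadj⟩⟩
    · by_cases hyX : y ∈ X
      · have hbc : b' = c := by
          by_contra hne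
          exact closed y hyX b' hb' hbX hne hadj.symm
        exact ⟨fun _ => (ih.2 hbX).tail
          ⟨Finset.mem_insert_self _ _, Finset.mem_insert_of_mem hyX, hbc ▸ hadj⟩,
          fun h' => absurd hyX h'⟩
      · exact ⟨fun h' => absurd h' hyX, fun _ => ih.2 hbX⟩

open Classical in
noncomputable def compOf (G : SimpleGraph V) (s : Finset V) (a : V) : Finset V :=
  s.filter fun x => reachIn G s a x

lemma mem_compOf {s : Finset V} {a x : V} :
    x ∈ compOf G s a ↔ x ∈ s ∧ reachIn G s a x := by
  classical
  simp [compOf]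

lemma compOf_subset {s : Finset V} {a : V} : compOf G s a ⊆ s :=
  fun _ hx => (mem_compOf.mp hx).1

lemma compOf_closed {s : Finset V} {a x y : V} (hx : x ∈ compOf G s a)
    (hy : y ∈ s) (hadj : G.Adj x y) : y ∈ compOf G s a := by
  obtain ⟨hxs, hxr⟩ := mem_compOf.mp hx
  exact mem_compOf.mpr ⟨hy, hxr.tail ⟨hxs, hy, hadj⟩⟩

structure IsPair (G : SimpleGraph V) (s : Finset V) (c : V) (X : Finset V) : Prop where
  hc : c ∈ s
  hXs : X ⊆ s
  hcX : c ∉ X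
  hne : X.Nonempty
  closed : ∀ x ∈ X, ∀ y ∈ s, y ∉ X → y ≠ c → ¬ G.Adj x y
  connRest : connIn G (s \ X)
  reachC : ∀ x ∈ X, reachIn G (insert c X) x c

/-- From any component of `s.erase c` we can build a pair. -/
lemma pair_of_comp {s : Finset V} {c a : V} (hconn : connIn G s) (hc : c ∈ s)
    (ha : a ∈ s.erase c) : IsPair G s c (compOf G (s.erase c) a) := by
  set X := compOf G (s.erase c) a with hXdef
  have hXsub : X ⊆ s.erase c := compOf_subset
  have hcX : c ∉ X := fun h => (Finset.mem_erase.mp (hXsub h)).1 rfl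
  have closed : ∀ x ∈ X, ∀ y ∈ s, y ∉ X → y ≠ c → ¬ G.Adj x y := by
    intro x hx y hy hyX hyc hadj
    exact hyX (compOf_closed hx (Finset.mem_erase.2 ⟨hyc, hy⟩) hadj)
  refine ⟨hc, hXsub.trans (Finset.erase_subset _ _), hcX,
    ⟨a, mem_compOf.2 ⟨ha, Relation.ReflTransGen.refl⟩⟩, closed, ?_, ?_⟩
  · -- connRest
    have key : ∀ y ∈ s \ X, reachIn G (s \ X) y c := by
      intro y hy
      have hy' := Finset.mem_sdiff.mp hy
      exact (portal_out closed hy'.2 (hconn y hy'.1 c hc)).1 hcX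
    intro u hu v hv
    exact (key u hu).trans (reachIn_symm (key v hv))
  · -- reachC
    intro x hx
    have hxs : x ∈ s := (Finset.erase_subset _ _) (hXsub hx)
    exact (portal_in closed hx (hconn x hxs c hc)).2 hcX

lemma pair_of_cut {s : Finset V} {c : V} (hconn : connIn G s) (hc : c ∈ s)
    (hncut : ¬ connIn G (s.erase c)) : ∃ X, IsPair G s c X := by
  unfold connIn at hncut
  push_neg at hncut
  obtain ⟨a, ha, _, _, _⟩ := hncut
  exact ⟨_, pair_of_comp hconn hc ha⟩

/-- For a minimal pair, every element of `X` fails to be a cut vertex. -/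
lemma pair_shrink {s : Finset V} {c : V} {X : Finset V} (hconn : connIn G s)
    (hp : IsPair G s c X) {x : V} (hx : x ∈ X) (hcut : ¬ connIn G (s.erase x)) :
    ∃ Y, IsPair G s x Y ∧ Y.card < X.card := by
  have hxs : x ∈ s := hp.hXs hx
  unfold connIn at hcut
  push_neg at hcut
  obtain ⟨a0, ha0, b0, hb0, hnr⟩ := hcut
  have hsub : s \ X ⊆ s.erase x := by
    intro y hy
    have := Finset.mem_sdiff.mp hy
    exact Finset.mem_erase.2 ⟨fun h => this.2 (h ▸ hx), this.1⟩
  have hcse : c ∈ s.erase x := hsub (Finset.mem_sdiff.2 ⟨hp.hc, hp.hcX⟩)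
  -- one of a0, b0 does not reach c in s.erase x
  have hw : ∃ w ∈ s.erase x, ¬ reachIn G (s.erase x) w c := by
    by_contra h
    push_neg at h
    exact hnr ((h a0 ha0).trans (reachIn_symm (h b0 hb0)))
  obtain ⟨w, hws, hwc⟩ := hw
  set Y := compOf G (s.erase x) w with hYdef
  have hYsub : Y ⊆ s.erase x := compOf_subset
  have hYX : Y ⊆ X.erase x := by
    intro z hz
    have hz' := mem_compOf.mp hz
    have hzs := Finset.mem_erase.mp hz'.1
    have hzX : z ∈ X := by
      by_contra hzX
      -- z ∈ s \ X reaches c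
      have : reachIn G (s.erase x) z c := by
        have hz2 : z ∈ s \ X := Finset.mem_sdiff.2 ⟨hzs.2, hzX⟩
        exact reachIn_mono hsub (hp.connRest z hz2 c (Finset.mem_sdiff.2 ⟨hp.hc, hp.hcX⟩))
      exact hwc (hz'.2.trans this)
    exact Finset.mem_erase.2 ⟨hzs.1, hzX⟩
  have hYlt : Y.card < X.card := by
    have h1 : Y.card ≤ (X.erase x).card := Finset.card_le_card hYX
    have h2 : (X.erase x).card + 1 = X.card := Finset.card_erase_add_one hx
    omega
  have closedY : ∀ z ∈ Y, ∀ y ∈ s, y ∉ Y → y ≠ x → ¬ G.Adj z y := by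
    intro z hz y hy hyY hyx hadj
    exact hyY (compOf_closed hz (Finset.mem_erase.2 ⟨hyx, hy⟩) hadj)
  have hxY : x ∉ Y := fun h => (Finset.mem_erase.mp (hYsub h)).1 rfl
  refine ⟨Y, ⟨hxs, hYsub.trans (Finset.erase_subset _ _), hxY,
    ⟨w, mem_compOf.2 ⟨hws, Relation.ReflTransGen.refl⟩⟩, closedY, ?_, ?_⟩, hYlt⟩
  · have key : ∀ y ∈ s \ Y, reachIn G (s \ Y) y x := by
      intro y hy
      have hy' := Finset.mem_sdiff.mp hy
      exact (portal_out closedY hy'.2 (hconn y hy'.1 x hxs)).1 hxY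
    intro u hu v hv
    exact (key u hu).trans (reachIn_symm (key v hv))
  · intro z hz
    have hzs : z ∈ s := (Finset.erase_subset _ _) (hYsub hz)
    exact (portal_in closedY hz (hconn z hzs x hxs)).2 hxY

/-- non-cut vertices of `s \ X` other than `c` are non-cut in `s`. -/
lemma pair_ncut_sub {s : Finset V} {c : V} {X : Finset V}
    (hp : IsPair G s c X) {v : V} (hv : v ∈ ncut G (s \ X)) (hvc : v ≠ c) :
    v ∈ ncut G s := by
  rw [mem_ncut] at hv ⊢
  obtain ⟨hvs', hvconn⟩ := hv
  have hvs := (Finset.mem_sdiff.mp hvs').1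
  have hvX := (Finset.mem_sdiff.mp hvs').2
  refine ⟨hvs, ?_⟩
  have hcv : c ∈ s.erase v := Finset.mem_erase.2 ⟨fun h => hvc h.symm, hp.hc⟩
  have key : ∀ y ∈ s.erase v, reachIn G (s.erase v) y c := by
    intro y hy
    have hy' := Finset.mem_erase.mp hy
    by_cases hyX : y ∈ X
    · -- use reachC and mono
      have h1 : reachIn G (insert c X) y c := hp.reachC y hyX
      refine reachIn_mono ?_ h1
      intro z hz
      rcases Finset.mem_insert.mp hz with h | h
      · exact h ▸ hcv
      · exact Finset.mem_erase.2 ⟨fun he => hvX (he ▸ h), hp.hXs h⟩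
    · have hy2 : y ∈ (s \ X).erase v := Finset.mem_erase.2 ⟨hy'.1, Finset.mem_sdiff.2 ⟨hy'.2, hyX⟩⟩
      have hc2 : c ∈ (s \ X).erase v := Finset.mem_erase.2 ⟨fun h => hvc h.symm, Finset.mem_sdiff.2 ⟨hp.hc, hp.hcX⟩⟩
      refine reachIn_mono ?_ (hvconn y hy2 c hc2)
      intro z hz
      have := Finset.mem_erase.mp hz
      exact Finset.mem_erase.2 ⟨this.1, (Finset.mem_sdiff.mp this.2).1⟩
  intro u hu v' hv'
  exact (key u hu).trans (reachIn_symm (key v' hv'))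


theorem comb (G : SimpleGraph V) : ∀ (n : ℕ) (s : Finset V), s.card ≤ n →
    connIn G s → s.Nonempty → ∀ r : V,
    ∃ I : Finset V, I ⊆ s ∧ (∀ a ∈ I, ∀ b ∈ I, a ≠ b → ¬ G.Adj a b) ∧
      s.card + (if r ∈ I then 1 else 0) + 7 ≤ 2 * I.card + 8 * (ncut G s).card := by
  intro n
  induction n with
  | zero =>
    intro s hs hconn hne r
    obtain ⟨v, hv⟩ := hne
    have := Finset.card_pos.mpr ⟨v, hv⟩
    omega
  | succ n IH =>
    intro s hs hconn hne r
    by_cases hall : ∀ v ∈ s, connIn G (s.erase v)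
    · have hQ : ncut G s = s := by
        apply Finset.Subset.antisymm (fun v hv => (mem_ncut.mp hv).1)
        intro v hv
        exact mem_ncut.mpr ⟨hv, hall v hv⟩
      have hcard1 : 1 ≤ s.card := Finset.card_pos.mpr hne
      by_cases hex : ∃ v ∈ s, v ≠ r
      · obtain ⟨v, hv, hvr⟩ := hex
        refine ⟨{v}, Finset.singleton_subset_iff.2 hv, ?_, ?_⟩
        · intro a ha b hb hab
          rw [Finset.mem_singleton] at ha hb
          exact absurd (ha.trans hb.symm) hab
        · have hr : r ∉ ({v} : Finset V) := by
            rw [Finset.mem_singleton]; exact fun h => hvr h.symm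
          rw [if_neg hr, hQ, Finset.card_singleton]
          omega
      · push_neg at hex
        have hcard : s.card ≤ 1 := Finset.card_le_one.mpr
          (fun a ha b hb => (hex a ha).trans (hex b hb).symm)
        refine ⟨∅, Finset.empty_subset _, by simp, ?_⟩
        rw [if_neg (Finset.notMem_empty r), hQ, Finset.card_empty]
        omega
    · push_neg at hall
      obtain ⟨c₀, hc₀, hcut₀⟩ := hall
      have hs3 : 3 ≤ s.card := by
        by_contra h
        push_neg at h
        have : (s.erase c₀).card ≤ 1 := by
          have := Finset.card_erase_add_one hc₀
          omega
        exact hcut₀ (connIn_of_card_le_one this)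
      -- minimal pair
      have hPP : ∃ k : ℕ, ∃ c, ∃ X : Finset V, IsPair G s c X ∧ X.card = k := by
        obtain ⟨X₀, hX₀⟩ := pair_of_cut hconn hc₀ hcut₀
        exact ⟨X₀.card, c₀, X₀, hX₀, rfl⟩
      obtain ⟨c, X, hp, hmin⟩ :
          ∃ c, ∃ X : Finset V, IsPair G s c X ∧
            ∀ c', ∀ X' : Finset V, IsPair G s c' X' → X.card ≤ X'.card := by
        classical
        obtain ⟨c, X, hpX, hk⟩ := Nat.find_spec hPP
        refine ⟨c, X, hpX, fun c' X' hp' => ?_⟩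
        by_contra hlt
        push_neg at hlt
        exact Nat.find_min hPP (by omega) ⟨c', X', hp', rfl⟩
      have hXQ : X ⊆ ncut G s := by
        intro x hx
        rw [mem_ncut]
        refine ⟨hp.hXs hx, ?_⟩
        by_contra hcut
        obtain ⟨Y, hpY, hYlt⟩ := pair_shrink hconn hp hx hcut
        exact absurd (hmin _ _ hpY) (by omega)
      have hX1' : 1 ≤ X.card := Finset.card_pos.mpr hp.hne
      set s' := s \ X with hs'def
      have hs'conn : connIn G s' := hp.connRest
      have hcs' : c ∈ s' := Finset.mem_sdiff.2 ⟨hp.hc, hp.hcX⟩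
      have hs'card : s'.card + X.card = s.card := Finset.card_sdiff_add_card_eq_card hp.hXs
      have hQsub : ncut G s' ⊆ insert c (ncut G s \ X) := by
        intro v hv
        rcases eq_or_ne v c with h | h
        · exact h ▸ Finset.mem_insert_self _ _
        · refine Finset.mem_insert_of_mem (Finset.mem_sdiff.2 ⟨pair_ncut_sub hp hv h, ?_⟩)
          exact (Finset.mem_sdiff.mp ((mem_ncut.mp hv).1)).2
      have hQ' : (ncut G s').card + X.card ≤ (ncut G s).card + 1 := by
        have h1 : (ncut G s').card ≤ (ncut G s \ X).card + 1 :=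
          (Finset.card_le_card hQsub).trans (Finset.card_insert_le _ _)
        have h2 : (ncut G s \ X).card + X.card = (ncut G s).card :=
          Finset.card_sdiff_add_card_eq_card hXQ
        omega
      have hs'n : s'.card ≤ n := by omega
      obtain ⟨I', hI'sub, hI'ind, hI'bound⟩ := IH s' hs'n hs'conn ⟨c, hcs'⟩ c
      by_cases hX1 : X.card = 1
      · -- X = {x}
        obtain ⟨x, hXx⟩ := Finset.card_eq_one.mp hX1
        have hxX : x ∈ X := hXx ▸ Finset.mem_singleton_self x
        have hxs : x ∈ s := hp.hXs hxX
        have hxQ : x ∈ ncut G s := hXQ hxX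
        have hxc : x ≠ c := fun h => hp.hcX (h ▸ hxX)
        have hclosedx : ∀ y ∈ s, y ≠ x → y ≠ c → ¬ G.Adj x y := by
          intro y hy hyx hyc
          refine hp.closed x hxX y hy ?_ hyc
          rw [hXx, Finset.mem_singleton]; exact hyx
        have hxs' : x ∉ s' := fun h => (Finset.mem_sdiff.mp h).2 hxX
        have hadjxc : G.Adj x c := by
          have hr := hp.reachC x hxX
          rcases hr.cases_head with heq | ⟨y, hstep, _⟩
          · exact absurd heq hxc
          · obtain ⟨_, hy, hadj⟩ := hstep
            rcases Finset.mem_insert.mp hy with h | h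
            · exact h ▸ hadj
            · rw [hXx, Finset.mem_singleton] at h
              exact absurd (h ▸ hadj) (G.loopless.irrefl x)
        have hxI' : x ∉ I' := fun h => hxs' (hI'sub h)
        have hnex : ∀ b ∈ s', b ≠ x := fun b hb h => (Finset.mem_sdiff.mp hb).2 (h ▸ hxX)
        have hins : ∀ J : Finset V, J ⊆ s' → c ∉ J →
            (∀ a ∈ J, ∀ b ∈ J, a ≠ b → ¬ G.Adj a b) →
            ∀ a ∈ insert x J, ∀ b ∈ insert x J, a ≠ b → ¬ G.Adj a b := by
          intro J hJs hcJ hJind a ha b hb hab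
          have hnadj : ∀ b' ∈ J, ¬ G.Adj x b' := by
            intro b' hb'
            have hbs' := Finset.mem_sdiff.mp (hJs hb')
            exact hclosedx b' hbs'.1 (hnex b' (hJs hb')) (fun h => hcJ (h ▸ hb'))
          rcases Finset.mem_insert.mp ha with rfl | haJ
          · rcases Finset.mem_insert.mp hb with rfl | hbJ
            · exact absurd rfl hab
            · exact hnadj b hbJ
          · rcases Finset.mem_insert.mp hb with rfl | hbJ
            · exact fun hadj => (hnadj a haJ) hadj.symm
            · exact hJind a haJ b hbJ hab
        have hsubS : ∀ J : Finset V, J ⊆ s' → insert x J ⊆ s := by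
          intro J hJs a ha
          rcases Finset.mem_insert.mp ha with rfl | haJ
          · exact hxs
          · exact Finset.sdiff_subset (hJs haJ)
        by_cases hcI : c ∈ I'
        · rw [if_pos hcI] at hI'bound
          by_cases hrc : r = c
          · -- B2i : swap c for x
            have hIe : (I'.erase c).card + 1 = I'.card := Finset.card_erase_add_one hcI
            have hxIe : x ∉ I'.erase c := fun h => hxI' (Finset.erase_subset _ _ h)
            have hIcard : (insert x (I'.erase c)).card = (I'.erase c).card + 1 :=
              Finset.card_insert_of_notMem hxIe
            have hrI : r ∉ insert x (I'.erase c) := by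
              rw [Finset.mem_insert]
              rintro (h | h)
              · exact hxc (hrc ▸ h).symm
              · exact (Finset.mem_erase.mp h).1 hrc
            refine ⟨insert x (I'.erase c), hsubS _ ((Finset.erase_subset _ _).trans hI'sub),
              hins _ ((Finset.erase_subset _ _).trans hI'sub)
                (fun h => (Finset.mem_erase.mp h).1 rfl)
                (fun a ha b hb hab => hI'ind a (Finset.erase_subset _ _ ha)
                  b (Finset.erase_subset _ _ hb) hab), ?_⟩
            rw [if_neg hrI]
            omega
          · by_cases hrx : r = x
            · -- B2ii : keep I'
              have hrI : r ∉ I' := fun h => hxI' (hrx ▸ h)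
              refine ⟨I', hI'sub.trans Finset.sdiff_subset, hI'ind, ?_⟩
              rw [if_neg hrI]
              omega
            · by_cases hcc : connIn G (s'.erase c)
              · -- pair peel: remove both x and c
                set s'' := s'.erase c with hs''def
                have hs''sub : s'' ⊆ s' := Finset.erase_subset _ _
                have hs''card : s''.card + 1 = s'.card := Finset.card_erase_add_one hcs'
                have hs''ne : s''.Nonempty := Finset.card_pos.mp (by omega)
                obtain ⟨I'', hI''sub, hI''ind, hI''bound⟩ := IH s'' (by omega) hcc hs''ne r
                have hcs'' : c ∉ s'' := Finset.notMem_erase _ _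
                have hQ'' : (ncut G s'').card ≤ (ncut G s).card := by
                  classical
                  set B := ncut G s'' \ ncut G s with hBdef
                  have key : ∀ v ∈ B, ∀ w ∈ s, G.Adj c w → w = x ∨ w = v := by
                    intro v hv w hw hadj
                    by_contra hcon
                    push_neg at hcon
                    obtain ⟨hwx, hwv⟩ := hcon
                    have hv1 := Finset.mem_sdiff.mp hv
                    obtain ⟨hvs'', hvconn⟩ := mem_ncut.mp hv1.1
                    have hvs' : v ∈ s' := hs''sub hvs''
                    have hvs : v ∈ s := Finset.sdiff_subset hvs'
                    have hvx : v ≠ x := hnex v hvs'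
                    have hvc : v ≠ c := (Finset.mem_erase.mp hvs'').1
                    have hwc : w ≠ c := fun h => G.loopless.irrefl c (h ▸ hadj)
                    have hws' : w ∈ s' := Finset.mem_sdiff.2 ⟨hw, by
                      rw [hXx, Finset.mem_singleton]; exact hwx⟩
                    have hws'' : w ∈ s'' := Finset.mem_erase.2 ⟨hwc, hws'⟩
                    have hwsv : w ∈ s''.erase v := Finset.mem_erase.2 ⟨hwv, hws''⟩
                    refine hv1.2 (mem_ncut.mpr ⟨hvs, ?_⟩)
                    have hcev : c ∈ s.erase v := Finset.mem_erase.2 ⟨fun h => hvc h.symm, hp.hc⟩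
                    have hwev : w ∈ s.erase v := Finset.mem_erase.2 ⟨hwv, hw⟩
                    have keyreach : ∀ y ∈ s.erase v, reachIn G (s.erase v) y w := by
                      intro y hy
                      have hy' := Finset.mem_erase.mp hy
                      by_cases hyx : y = x
                      · subst hyx
                        exact (Relation.ReflTransGen.refl.tail
                          ⟨hy, hcev, hadjxc⟩).tail ⟨hcev, hwev, hadj⟩
                      · by_cases hyc : y = c
                        · subst hyc
                          exact Relation.ReflTransGen.refl.tail ⟨hy, hwev, hadj⟩
                        · have hys' : y ∈ s' := Finset.mem_sdiff.2 ⟨hy'.2, by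
                            rw [hXx, Finset.mem_singleton]; exact hyx⟩
                          have hysv : y ∈ s''.erase v :=
                            Finset.mem_erase.2 ⟨hy'.1, Finset.mem_erase.2 ⟨hyc, hys'⟩⟩
                          refine reachIn_mono ?_ (hvconn y hysv w hwsv)
                          intro z hz
                          have hz1 := Finset.mem_erase.mp hz
                          have hz2 := Finset.mem_erase.mp hz1.2
                          exact Finset.mem_erase.2 ⟨hz1.1, Finset.sdiff_subset hz2.2⟩
                    intro a ha b hb
                    exact (keyreach a ha).trans (reachIn_symm (keyreach b hb))
                  have hB1 : B.card ≤ 1 := by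
                    rw [Finset.card_le_one]
                    intro v₁ hv₁ v₂ hv₂
                    by_contra hne
                    obtain ⟨z, hz⟩ := hs''ne
                    have hzs' : z ∈ s' := hs''sub hz
                    have hzc : z ≠ c := (Finset.mem_erase.mp hz).1
                    rcases (hs'conn c hcs' z hzs').cases_head with heq | ⟨y₁, hstep, _⟩
                    · exact hzc heq.symm
                    · obtain ⟨_, hy₁s', hadjcy⟩ := hstep
                      have hy₁s : y₁ ∈ s := Finset.sdiff_subset hy₁s'
                      have hy₁x : y₁ ≠ x := hnex y₁ hy₁s'
                      rcases key v₁ hv₁ y₁ hy₁s hadjcy with h | h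
                      · exact hy₁x h
                      · rcases key v₂ hv₂ y₁ hy₁s hadjcy with h' | h'
                        · exact hy₁x h'
                        · exact hne (h ▸ h' ▸ rfl)
                  have hsub2 : ncut G s'' ⊆ B ∪ (ncut G s).erase x := by
                    intro v hv
                    by_cases hvQ : v ∈ ncut G s
                    · refine Finset.mem_union_right _ (Finset.mem_erase.2 ⟨?_, hvQ⟩)
                      exact hnex v (hs''sub (mem_ncut.mp hv).1)
                    · exact Finset.mem_union_left _ (Finset.mem_sdiff.2 ⟨hv, hvQ⟩)
                  have h3 : (ncut G s'').card ≤ B.card + ((ncut G s).erase x).card :=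
                    (Finset.card_le_card hsub2).trans (Finset.card_union_le _ _)
                  have h4 : ((ncut G s).erase x).card + 1 = (ncut G s).card :=
                    Finset.card_erase_add_one hxQ
                  omega
                have hxI'' : x ∉ I'' := fun h => hxs' (hs''sub (hI''sub h))
                have hcI'' : c ∉ I'' := fun h => hcs'' (hI''sub h)
                have hIcard : (insert x I'').card = I''.card + 1 :=
                  Finset.card_insert_of_notMem hxI''
                refine ⟨insert x I'', hsubS _ (hI''sub.trans hs''sub),
                  hins _ (hI''sub.trans hs''sub) hcI'' hI''ind, ?_⟩
                have hite : (if r ∈ insert x I'' then (1:ℕ) else 0) =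
                    (if r ∈ I'' then (1:ℕ) else 0) := by
                  simp [Finset.mem_insert, hrx]
                rw [hite]
                by_cases hri : r ∈ I'' <;> [rw [if_pos hri] at hI''bound ⊢;
                  rw [if_neg hri] at hI''bound ⊢] <;> omega
              · -- c is a cut vertex of s'
                have hQ'2 : (ncut G s').card + 1 ≤ (ncut G s).card := by
                  have hsubQ : ncut G s' ⊆ (ncut G s).erase x := by
                    intro v hv
                    have hvc : v ≠ c := by
                      rintro rfl
                      exact hcc (mem_ncut.mp hv).2
                    refine Finset.mem_erase.2 ⟨hnex v (mem_ncut.mp hv).1, ?_⟩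
                    exact pair_ncut_sub hp hv hvc
                  have h4 : ((ncut G s).erase x).card + 1 = (ncut G s).card :=
                    Finset.card_erase_add_one hxQ
                  have := Finset.card_le_card hsubQ
                  omega
                have hIe : (I'.erase c).card + 1 = I'.card := Finset.card_erase_add_one hcI
                have hxIe : x ∉ I'.erase c := fun h => hxI' (Finset.erase_subset _ _ h)
                have hIcard : (insert x (I'.erase c)).card = (I'.erase c).card + 1 :=
                  Finset.card_insert_of_notMem hxIe
                have hRb : (if r ∈ insert x (I'.erase c) then 1 else 0) ≤ 1 := by
                  split <;> omega
                refine ⟨insert x (I'.erase c), hsubS _ ((Finset.erase_subset _ _).trans hI'sub),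
                  hins _ ((Finset.erase_subset _ _).trans hI'sub)
                    (fun h => (Finset.mem_erase.mp h).1 rfl)
                    (fun a ha b hb hab => hI'ind a (Finset.erase_subset _ _ ha)
                      b (Finset.erase_subset _ _ hb) hab), ?_⟩
                omega
        · -- B1 : c ∉ I', add x
          rw [if_neg hcI] at hI'bound
          have hIcard : (insert x I').card = I'.card + 1 :=
            Finset.card_insert_of_notMem hxI'
          have hRb : (if r ∈ insert x I' then 1 else 0) ≤ 1 := by split <;> omega
          exact ⟨insert x I', hsubS _ hI'sub, hins _ hI'sub hcI hI'ind, by omega⟩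
      · -- |X| ≥ 2 : case A
        have hX2 : 2 ≤ X.card := by omega
        have hRb : (if r ∈ I' then 1 else 0) ≤ 1 := by split <;> omega
        have hIH' : s'.card + 7 ≤ 2 * I'.card + 8 * (ncut G s').card := by
          rcases (by split <;> omega :
            (if c ∈ I' then 1 else 0) = 0 ∨ (if c ∈ I' then 1 else 0) = 1) with h | h <;>
            rw [h] at hI'bound <;> omega
        exact ⟨I', hI'sub.trans (Finset.sdiff_subset), hI'ind, by omega⟩

noncomputable def toC (x : EuclideanSpace ℝ (Fin 2)) : ℂ := ⟨x 0, x 1⟩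

lemma dist_toC (x y : EuclideanSpace ℝ (Fin 2)) : dist (toC x) (toC y) = dist x y := by
  rw [Complex.dist_eq, EuclideanSpace.dist_eq, Complex.norm_def]
  congr 1
  rw [Fin.sum_univ_two]
  have h : toC x - toC y = ⟨x 0 - y 0, x 1 - y 1⟩ := by
    apply Complex.ext <;> simp [toC]
  rw [h, Complex.normSq_mk]
  simp [Real.dist_eq, sq_abs]
  ring

lemma close_of_angle (a b : ℂ) (ha1 : ‖a‖ ≤ 1) (hb1 : ‖b‖ ≤ 1)
    (hang : |a.arg - b.arg| ≤ Real.pi / 3) : ‖a - b‖ ≤ 1 := by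
  have hre : (a * (starRingEnd ℂ) b).re =
      (‖a‖) * (‖b‖) * Real.cos (a.arg - b.arg) := by
    conv_lhs => rw [← Complex.norm_mul_exp_arg_mul_I a, ← Complex.norm_mul_exp_arg_mul_I b]
    rw [map_mul, Complex.conj_ofReal, ← Complex.exp_conj]
    have h1 : (starRingEnd ℂ) (↑b.arg * Complex.I) = -(↑b.arg * Complex.I) := by
      rw [map_mul, Complex.conj_ofReal, Complex.conj_I]; ring
    rw [h1]
    have h2 : (↑(‖a‖) * Complex.exp (↑a.arg * Complex.I)) *
        (↑(‖b‖) * Complex.exp (-(↑b.arg * Complex.I))) =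
        (↑(‖a‖ * ‖b‖) : ℂ) *
          Complex.exp (↑(a.arg - b.arg) * Complex.I) := by
      rw [mul_mul_mul_comm, ← Complex.exp_add]
      push_cast
      ring_nf
    rw [h2, Complex.re_ofReal_mul, Complex.exp_ofReal_mul_I_re]
  have hpi : (0:ℝ) < Real.pi := Real.pi_pos
  have hcos : (1:ℝ)/2 ≤ Real.cos (a.arg - b.arg) := by
    have h1 : Real.cos (Real.pi/3) ≤ Real.cos |a.arg - b.arg| :=
      Real.cos_le_cos_of_nonneg_of_le_pi (abs_nonneg _) (by linarith) hang
    rw [Real.cos_abs, Real.cos_pi_div_three] at h1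
    exact h1
  have hid : (‖a-b‖)^2 =
      (‖a‖)^2 + (‖b‖)^2 - 2 * (a * (starRingEnd ℂ) b).re := by
    rw [Complex.sq_norm, Complex.sq_norm, Complex.sq_norm, Complex.normSq_sub]
  have hA0 : 0 ≤ ‖a‖ := norm_nonneg a
  have hB0 : 0 ≤ ‖b‖ := norm_nonneg b
  have hAB0 : 0 ≤ ‖a‖ * ‖b‖ := mul_nonneg hA0 hB0
  have hsq : (‖a-b‖)^2 ≤ 1 := by
    rw [hid, hre]
    nlinarith [mul_nonneg (sub_nonneg.2 ha1) (sub_nonneg.2 hb1), sq_nonneg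
      (‖a‖ - ‖b‖)]
  nlinarith [norm_nonneg (a-b)]

lemma sector_close {u v : ℝ} (hu : 0 < u) (hu6 : u ≤ 6) (hv : 0 < v) (hv6 : v ≤ 6)
    (h : (min ⌊u⌋ 5).toNat = (min ⌊v⌋ 5).toNat) : |u - v| ≤ 1 := by
  have h0u : (0:ℤ) ≤ ⌊u⌋ := Int.floor_nonneg.2 hu.le
  have h0v : (0:ℤ) ≤ ⌊v⌋ := Int.floor_nonneg.2 hv.le
  have hmm : min ⌊u⌋ 5 = min ⌊v⌋ 5 := by omega
  have key : ∀ w : ℝ, 0 < w → w ≤ 6 → ((min ⌊w⌋ 5 : ℤ) : ℝ) ≤ w ∧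
      w ≤ ((min ⌊w⌋ 5 : ℤ) : ℝ) + 1 := by
    intro w hw hw6
    have hfl : ((⌊w⌋ : ℤ) : ℝ) ≤ w := Int.floor_le w
    have hfl2 : w < ((⌊w⌋ : ℤ) : ℝ) + 1 := Int.lt_floor_add_one w
    rcases le_or_gt ⌊w⌋ 5 with h5 | h5
    · rw [min_eq_left h5]
      exact ⟨hfl, hfl2.le⟩
    · rw [min_eq_right h5.le]
      have h6 : (6:ℝ) ≤ ((⌊w⌋:ℤ):ℝ) := by exact_mod_cast h5
      constructor
      · push_cast; linarith
      · push_cast; linarith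
  obtain ⟨hu1, hu2⟩ := key u hu hu6
  obtain ⟨hv1, hv2⟩ := key v hv hv6
  rw [hmm] at hu1 hu2
  rw [abs_le]
  constructor <;> linarith

lemma packing (o : EuclideanSpace ℝ (Fin 2)) (T : Finset (EuclideanSpace ℝ (Fin 2)))
    (h1 : ∀ z ∈ T, dist z o ≤ 1) (h2 : ∀ z ∈ T, ∀ w ∈ T, z ≠ w → 1 < dist z w) :
    T.card ≤ 6 := by
  by_contra hcon
  push_neg at hcon
  have hoT : o ∉ T := by
    intro ho
    obtain ⟨z, hz, hzo⟩ := Finset.exists_mem_ne (s := T) (by omega) o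
    exact absurd (h1 z hz) (not_le.2 (h2 z hz o ho hzo))
  have hpi : (0:ℝ) < Real.pi := Real.pi_pos
  set f : EuclideanSpace ℝ (Fin 2) → ℕ :=
    fun z => (min ⌊(Complex.arg (toC z - toC o) + Real.pi) * 3 / Real.pi⌋ 5).toNat with hfdef
  have hmaps : ∀ z ∈ T, f z ∈ Finset.range 6 := by
    intro z _
    rw [Finset.mem_range]
    have : min ⌊(Complex.arg (toC z - toC o) + Real.pi) * 3 / Real.pi⌋ 5 ≤ 5 :=
      min_le_right _ _
    simp only [hfdef]
    omega
  obtain ⟨z, hzT, w, hwT, hzw, hfzw⟩ :=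
    Finset.exists_ne_map_eq_of_card_lt_of_maps_to (by rw [Finset.card_range]; omega) hmaps
  set a := toC z - toC o with hadef
  set b := toC w - toC o with hbdef
  have habs : ‖a‖ = dist z o := by
    rw [hadef, ← Complex.dist_eq, dist_toC]
  have hbabs : ‖b‖ = dist w o := by
    rw [hbdef, ← Complex.dist_eq, dist_toC]
  have hdist : dist z w = ‖a - b‖ := by
    have h : a - b = toC z - toC w := by rw [hadef, hbdef]; ring
    rw [h, ← Complex.dist_eq, dist_toC]
  have harg : ∀ c : ℂ, 0 < (c.arg + Real.pi) * 3 / Real.pi ∧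
      (c.arg + Real.pi) * 3 / Real.pi ≤ 6 := by
    intro c
    have hl := Complex.neg_pi_lt_arg c
    have hr := Complex.arg_le_pi c
    constructor
    · apply div_pos _ hpi
      nlinarith
    · rw [div_le_iff₀ hpi]
      nlinarith
  have hsec := sector_close (harg a).1 (harg a).2 (harg b).1 (harg b).2 hfzw
  have hang : |a.arg - b.arg| ≤ Real.pi / 3 := by
    have he : (a.arg + Real.pi) * 3 / Real.pi - (b.arg + Real.pi) * 3 / Real.pi =
        (a.arg - b.arg) * (3 / Real.pi) := by field_simp; ring
    rw [he] at hsec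
    rw [abs_mul, abs_of_pos (by positivity : (0:ℝ) < 3 / Real.pi)] at hsec
    have he2 : |a.arg - b.arg| * (3 / Real.pi) = (|a.arg - b.arg| * 3) / Real.pi := by
      ring
    rw [he2, div_le_one hpi] at hsec
    linarith
  have hle := close_of_angle a b (by rw [habs]; exact h1 z hzT)
    (by rw [hbabs]; exact h1 w hwT) hang
  rw [← hdist] at hle
  exact absurd hle (not_le.2 (h2 z hzT w hwT hzw))



def ptGraph (P : Finset (EuclideanSpace ℝ (Fin 2))) : SimpleGraph {p // p ∈ P} where
  Adj p q := p ≠ q ∧ dist (p : EuclideanSpace ℝ (Fin 2)) (q : EuclideanSpace ℝ (Fin 2)) ≤ 1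
  symm := by constructor; rintro p q ⟨h1, h2⟩; exact ⟨h1.symm, by rwa [dist_comm]⟩
  loopless := by constructor; rintro p ⟨h1, _⟩; exact h1 rfl

lemma conn_of_induce {P P₀ : Finset (EuclideanSpace ℝ (Fin 2))}
    {S : Finset {p // p ∈ P}}
    (h : ((pendantUnitDiskGraph P P₀).induce
      (Sum.inl '' (↑S : Set {p // p ∈ P}))).Connected) :
    connIn (ptGraph P) S := by
  intro a ha b hb
  have hva : (Sum.inl a : {p // p ∈ P} ⊕ {p // p ∈ P₀}) ∈
      (Sum.inl '' (↑S : Set {p // p ∈ P})) := ⟨a, Finset.mem_coe.mpr ha, rfl⟩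
  have hvb : (Sum.inl b : {p // p ∈ P} ⊕ {p // p ∈ P₀}) ∈
      (Sum.inl '' (↑S : Set {p // p ∈ P})) := ⟨b, Finset.mem_coe.mpr hb, rfl⟩
  have hr := h.preconnected ⟨_, hva⟩ ⟨_, hvb⟩
  rw [SimpleGraph.reachable_iff_reflTransGen] at hr
  suffices haux : ∀ (y : {x // x ∈ Sum.inl '' (↑S : Set {p // p ∈ P})}),
      Relation.ReflTransGen
        ((pendantUnitDiskGraph P P₀).induce (Sum.inl '' (↑S : Set {p // p ∈ P}))).Adj
        ⟨Sum.inl a, hva⟩ y →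
      ∀ q : {p // p ∈ P}, q ∈ S → y.1 = Sum.inl q → reachIn (ptGraph P) S a q by
    exact haux _ hr b hb rfl
  intro y hy
  induction hy with
  | refl =>
    intro q _ heq
    have : a = q := Sum.inl.inj heq
    exact this ▸ Relation.ReflTransGen.refl
  | @tail u w _ hstep ih =>
    intro q hq heq
    obtain ⟨p', hp'S, hp'⟩ := u.2
    have hstep' : (pendantUnitDiskGraph P P₀).Adj u.1 w.1 := hstep
    rw [← hp', heq] at hstep'
    have hmem : p' ∈ S := Finset.mem_coe.mp hp'S
    exact (ih p' hmem hp'.symm).tail ⟨hmem, hq, hstep'⟩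

lemma induce_of_conn {P P₀ : Finset (EuclideanSpace ℝ (Fin 2))}
    {S : Finset {p // p ∈ P}} (hne : S.Nonempty)
    (h : connIn (ptGraph P) S) :
    ((pendantUnitDiskGraph P P₀).induce
      (Sum.inl '' (↑S : Set {p // p ∈ P}))).Connected := by
  obtain ⟨d, hd⟩ := hne
  have key : ∀ p : {p // p ∈ P}, ∀ hp : p ∈ S, ∀ q' : {p // p ∈ P},
      reachIn (ptGraph P) S p q' → ∀ hq' : q' ∈ S,
      ((pendantUnitDiskGraph P P₀).induce
        (Sum.inl '' (↑S : Set {p // p ∈ P}))).Reachable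
        ⟨Sum.inl p, ⟨p, Finset.mem_coe.mpr hp, rfl⟩⟩
        ⟨Sum.inl q', ⟨q', Finset.mem_coe.mpr hq', rfl⟩⟩ := by
    intro p hp q' hr
    induction hr with
    | refl => intro _; exact SimpleGraph.Reachable.refl _
    | @tail u w _ hstep ih =>
      intro hw'
      obtain ⟨huS, hwS, hadj⟩ := hstep
      refine (ih huS).trans (SimpleGraph.Adj.reachable ?_)
      show (pendantUnitDiskGraph P P₀).Adj (Sum.inl u) (Sum.inl w)
      exact hadj
  rw [SimpleGraph.connected_iff]
  refine ⟨?_, ⟨⟨Sum.inl d, ⟨d, Finset.mem_coe.mpr hd, rfl⟩⟩⟩⟩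
  rintro ⟨x, hx⟩ ⟨y, hy⟩
  obtain ⟨p, hpS, hp⟩ := hx
  obtain ⟨q, hqS, hq⟩ := hy
  have hp' : p ∈ S := Finset.mem_coe.mp hpS
  have hq' : q ∈ S := Finset.mem_coe.mp hqS
  have h1 : (⟨x, ⟨p, hpS, hp⟩⟩ : {x // x ∈ Sum.inl '' (↑S : Set {p // p ∈ P})}) =
      ⟨Sum.inl p, ⟨p, hpS, rfl⟩⟩ := Subtype.ext hp.symm
  have h2 : (⟨y, ⟨q, hqS, hq⟩⟩ : {x // x ∈ Sum.inl '' (↑S : Set {p // p ∈ P})}) =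
      ⟨Sum.inl q, ⟨q, hqS, rfl⟩⟩ := Subtype.ext hq.symm
  rw [h1, h2]
  exact key p hp' q (h p hp' q hq') hq'

end UDGaux

/-- Paper's Theorem 3: Let `D ⊆ P` satisfy (i) the subgraph of the
pendant-augmented unit disk graph `G_r` induced by `D` is connected, (ii) every dummy vertex
is adjacent to some vertex of `D`, and (iii) every `v ∈ D` is "fixed": removing `v` from `D`
either disconnects the induced subgraph or leaves some dummy vertex with no neighbor in
`D \ {v}`. Then for every nonempty connected dominating set `OPT` of `G_r`,
`|D| ≤ 20|OPT| + 4`. -/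
theorem card_le_twenty_opt_add_four (P P₀ : Finset (EuclideanSpace ℝ (Fin 2)))
    (hP : P.Nonempty) (hP₀ : P₀ ⊆ P)
    (D : Finset {p // p ∈ P})
    (hconn : ((pendantUnitDiskGraph P P₀).induce
      (Sum.inl '' (↑D : Set {p // p ∈ P}))).Connected)
    (hcov : ∀ u : {p // p ∈ P₀}, ∃ d ∈ D,
      (pendantUnitDiskGraph P P₀).Adj (Sum.inr u) (Sum.inl d))
    (hfixed : ∀ v ∈ D,
      ¬ ((pendantUnitDiskGraph P P₀).induce
          (Sum.inl '' ((↑D : Set {p // p ∈ P}) \ {v}))).Connected ∨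
      ∃ u : {p // p ∈ P₀}, ∀ d ∈ D, d ≠ v →
        ¬ (pendantUnitDiskGraph P P₀).Adj (Sum.inr u) (Sum.inl d))
    (OPT : Finset ({p // p ∈ P} ⊕ {p // p ∈ P₀})) (hOPTne : OPT.Nonempty)
    (hOPTdom : ∀ v : {p // p ∈ P} ⊕ {p // p ∈ P₀}, v ∉ OPT →
      ∃ d ∈ OPT, (pendantUnitDiskGraph P P₀).Adj v d)
    (hOPTconn : ((pendantUnitDiskGraph P P₀).induce
      (↑OPT : Set ({p // p ∈ P} ⊕ {p // p ∈ P₀}))).Connected) :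
    D.card ≤ 20 * OPT.card + 4 := by
  classical
  by_cases hD1 : D.card ≤ 1
  · omega
  push_neg at hD1
  have hDne : D.Nonempty := Finset.card_pos.mp (by omega)
  have hconnD : UDGaux.connIn (UDGaux.ptGraph P) D := UDGaux.conn_of_induce hconn
  -- non-cut vertices inject into P₀
  have hpoles : (UDGaux.ncut (UDGaux.ptGraph P) D).card ≤ P₀.card := by
    apply Finset.card_le_card_of_injOn
      (fun v : {p // p ∈ P} => (v : EuclideanSpace ℝ (Fin 2)))
    · intro v hv
      rw [Finset.mem_coe, UDGaux.mem_ncut] at hv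
      rcases hfixed v hv.1 with hdisc | ⟨u, hu⟩
      · exfalso
        have hne' : (D.erase v).Nonempty := by
          have := Finset.card_erase_add_one hv.1
          exact Finset.card_pos.mp (by omega)
        have hc := UDGaux.induce_of_conn (P₀ := P₀) hne' hv.2
        rw [Finset.coe_erase] at hc
        exact hdisc hc
      · obtain ⟨d, hdD, hadj⟩ := hcov u
        have hdv : d = v := by
          by_contra hne
          exact hu d hdD hne hadj
        have heq : (d : EuclideanSpace ℝ (Fin 2)) = (u : EuclideanSpace ℝ (Fin 2)) := hadj
        have : (v : EuclideanSpace ℝ (Fin 2)) = (u : EuclideanSpace ℝ (Fin 2)) :=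
          hdv ▸ heq
        beta_reduce
        rw [this]
        exact u.2
    · intro a _ b _ hab
      exact Subtype.ext hab
  -- P₀ injects into OPT
  have hP0le : P₀.card ≤ OPT.card := by
    have key : ∀ u : EuclideanSpace ℝ (Fin 2), u ∈ P₀ →
        ∃ w ∈ OPT, Sum.elim (fun p : {p // p ∈ P} => (p : EuclideanSpace ℝ (Fin 2)))
          (fun p : {p // p ∈ P₀} => (p : EuclideanSpace ℝ (Fin 2))) w = u := by
      intro u hu
      by_cases h : (Sum.inr ⟨u, hu⟩ : {p // p ∈ P} ⊕ {p // p ∈ P₀}) ∈ OPT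
      · exact ⟨_, h, rfl⟩
      · obtain ⟨w, hw, hadj⟩ := hOPTdom _ h
        rcases w with p | u'
        · exact ⟨Sum.inl p, hw, hadj⟩
        · exact absurd hadj (by exact fun h => h)
    have hsub : P₀ ⊆ OPT.image (Sum.elim
        (fun p : {p // p ∈ P} => (p : EuclideanSpace ℝ (Fin 2)))
        (fun p : {p // p ∈ P₀} => (p : EuclideanSpace ℝ (Fin 2)))) := by
      intro u hu
      obtain ⟨w, hw, hweq⟩ := key u hu
      exact Finset.mem_image.mpr ⟨w, hw, hweq⟩
    exact (Finset.card_le_card hsub).trans (Finset.card_image_le)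
  -- every point of D is within distance 1 of the coordinate of some OPT vertex
  set coordE : ({p // p ∈ P} ⊕ {p // p ∈ P₀}) → EuclideanSpace ℝ (Fin 2) :=
    Sum.elim (fun p => (p : EuclideanSpace ℝ (Fin 2)))
      (fun p => (p : EuclideanSpace ℝ (Fin 2))) with hcoordE
  have hdom : ∀ i : {p // p ∈ P}, i ∈ D →
      ∃ w ∈ OPT, dist (i : EuclideanSpace ℝ (Fin 2)) (coordE w) ≤ 1 := by
    intro i _
    by_cases h : (Sum.inl i : {p // p ∈ P} ⊕ {p // p ∈ P₀}) ∈ OPT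
    · exact ⟨_, h, by simp [hcoordE]⟩
    · obtain ⟨w, hw, hadj⟩ := hOPTdom _ h
      rcases w with q | u
      · have : i ≠ q ∧ dist (i : EuclideanSpace ℝ (Fin 2))
            (q : EuclideanSpace ℝ (Fin 2)) ≤ 1 := hadj
        exact ⟨Sum.inl q, hw, this.2⟩
      · have : (i : EuclideanSpace ℝ (Fin 2)) = (u : EuclideanSpace ℝ (Fin 2)) := hadj
        exact ⟨Sum.inr u, hw, by rw [hcoordE]; simp [this]⟩
  -- run the combinatorial theorem
  obtain ⟨r, hr⟩ := hDne
  obtain ⟨I, hIsub, hIind, hIbound⟩ :=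
    UDGaux.comb (UDGaux.ptGraph P) D.card D le_rfl hconnD ⟨r, hr⟩ r
  -- bound the independent set by 6 * |OPT|
  have hI6 : I.card ≤ 6 * OPT.card := by
    set fib : ({p // p ∈ P} ⊕ {p // p ∈ P₀}) → Finset {p // p ∈ P} :=
      fun w => I.filter (fun i => dist i.1 (coordE w) ≤ 1) with hfibdef
    have hIsubB : I ⊆ OPT.biUnion fib := by
      intro i hi
      obtain ⟨w, hw, hd⟩ := hdom i (hIsub hi)
      exact Finset.mem_biUnion.mpr ⟨w, hw, Finset.mem_filter.mpr ⟨hi, hd⟩⟩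
    have hfib : ∀ w ∈ OPT, (fib w).card ≤ 6 := by
      intro w _
      have hcard : (fib w).card = ((fib w).image
          (fun i : {p // p ∈ P} => i.1)).card :=
        (Finset.card_image_of_injective _ (fun a b h => Subtype.ext h)).symm
      rw [hcard]
      apply UDGaux.packing (coordE w)
      · intro z hz
        obtain ⟨i, hi, hieq⟩ := Finset.mem_image.mp hz
        rw [← hieq]
        exact (Finset.mem_filter.mp hi).2
      · intro z hz z' hz' hne
        obtain ⟨i, hi, hieq⟩ := Finset.mem_image.mp hz
        obtain ⟨j, hj, hjeq⟩ := Finset.mem_image.mp hz'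
        have hij : i ≠ j := by
          intro h
          exact hne (by rw [← hieq, ← hjeq, h])
        have hnadj := hIind i (Finset.mem_filter.mp hi).1 j (Finset.mem_filter.mp hj).1 hij
        have hsp : ¬ (i ≠ j ∧ dist (i : EuclideanSpace ℝ (Fin 2))
            (j : EuclideanSpace ℝ (Fin 2)) ≤ 1) := hnadj
        push_neg at hsp
        rw [← hieq, ← hjeq]
        exact hsp hij
    calc I.card ≤ (OPT.biUnion fib).card := Finset.card_le_card hIsubB
      _ ≤ ∑ w ∈ OPT, (fib w).card := Finset.card_biUnion_le
      _ ≤ OPT.card * 6 := by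
          have := Finset.sum_le_card_nsmul OPT (fun w => (fib w).card) 6 hfib
          simpa using this
      _ = 6 * OPT.card := by ring
  have hRpos : (0:ℕ) ≤ (if r ∈ I then 1 else 0) := by omega
  have hR1 : (if r ∈ I then (1:ℕ) else 0) ≤ 1 := by split <;> omega
  omega
end

section
/- Let G_r be a pendant-augmented unit disk graph on a finite set P of points in ℝ² with pendants at a subset P₀ ⊆ P. Let p, q ∈ P be distinct points with Euclidean distance at most 1 (so p and q are adjacent in G_r). Then every independent set of G_r consisting of neighbors of p that are not neighbors of q and are distinct from q has at most 5 vertices. -/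

private lemma aux_inner_lt {a b : ℂ} (ha1 : ‖a‖ ≤ 1) (hb1 : ‖b‖ ≤ 1)
    (hd : 1 < dist a b) : (a * (starRingEnd ℂ) b).re < ‖a‖ * ‖b‖ / 2 := by
  have hs2 : ‖a‖ ^ 2 = a.re ^ 2 + a.im ^ 2 := by
    rw [Complex.sq_norm, Complex.normSq_apply]; ring
  have ht2 : ‖b‖ ^ 2 = b.re ^ 2 + b.im ^ 2 := by
    rw [Complex.sq_norm, Complex.normSq_apply]; ring
  have hs0 := norm_nonneg a
  have ht0 := norm_nonneg b
  have hd2 : 1 < (a.re - b.re) ^ 2 + (a.im - b.im) ^ 2 := by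
    rw [Complex.dist_eq_re_im] at hd
    have hX : (0:ℝ) ≤ (a.re - b.re) ^ 2 + (a.im - b.im) ^ 2 := by positivity
    nlinarith [Real.sq_sqrt hX, Real.sqrt_nonneg ((a.re - b.re) ^ 2 + (a.im - b.im) ^ 2)]
  have hre : (a * (starRingEnd ℂ) b).re = a.re * b.re + a.im * b.im := by
    simp [Complex.mul_re]
  rw [hre]
  nlinarith [mul_nonneg hs0 ht0, mul_nonneg (sub_nonneg.mpr ha1) (sub_nonneg.mpr hb1),
    mul_nonneg hs0 (sub_nonneg.mpr ha1), mul_nonneg ht0 (sub_nonneg.mpr hb1)]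

private lemma aux_cos_arg_div {u v : ℂ} (hu : u ≠ 0) (hv : v ≠ 0) :
    Real.cos ((u / v).arg) = (u * (starRingEnd ℂ) v).re / (‖u‖ * ‖v‖) := by
  rw [Complex.cos_arg (div_ne_zero hu hv), norm_div, Complex.div_re]
  have h1 : Complex.normSq v = ‖v‖ ^ 2 := (Complex.sq_norm v).symm
  have h2 : ‖u‖ ≠ 0 := norm_ne_zero_iff.mpr hu
  have h3 : ‖v‖ ≠ 0 := norm_ne_zero_iff.mpr hv
  rw [h1]
  field_simp [Complex.mul_re]
  rw [Complex.mul_re, Complex.conj_re, Complex.conj_im]; ring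

private lemma aux_cos_arg_sub {u v : ℂ} (hu : u ≠ 0) (hv : v ≠ 0) :
    Real.cos (u.arg - v.arg) = (u * (starRingEnd ℂ) v).re / (‖u‖ * ‖v‖) := by
  rw [Real.cos_sub, Complex.cos_arg hu, Complex.cos_arg hv, Complex.sin_arg, Complex.sin_arg]
  have h2 : ‖u‖ ≠ 0 := norm_ne_zero_iff.mpr hu
  have h3 : ‖v‖ ≠ 0 := norm_ne_zero_iff.mpr hv
  field_simp
  rw [Complex.mul_re, Complex.conj_re, Complex.conj_im]; ring

private lemma aux_cos_arg_sub_div {a b w : ℂ} (ha : a ≠ 0) (hb : b ≠ 0) (hw : w ≠ 0) :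
    Real.cos ((a / w).arg - (b / w).arg) =
      (a * (starRingEnd ℂ) b).re / (‖a‖ * ‖b‖) := by
  rw [aux_cos_arg_sub (div_ne_zero ha hw) (div_ne_zero hb hw)]
  have h1 : (a / w) * (starRingEnd ℂ) (b / w) = (a * (starRingEnd ℂ) b) / ((Complex.normSq w : ℝ) : ℂ) := by
    rw [map_div₀]
    rw [div_mul_div_comm, ← Complex.mul_conj]
  rw [h1, Complex.div_ofReal_re, norm_div, norm_div]
  have h2 : ‖w‖ ≠ 0 := norm_ne_zero_iff.mpr hw
  have ha' : ‖a‖ ≠ 0 := norm_ne_zero_iff.mpr ha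
  have hb' : ‖b‖ ≠ 0 := norm_ne_zero_iff.mpr hb
  have h3 : Complex.normSq w = ‖w‖ ^ 2 := (Complex.sq_norm w).symm
  rw [h3]
  have h4 : ‖w‖ ^ 2 ≠ 0 := pow_ne_zero 2 h2
  field_simp

private lemma aux_phi_mem {θ : ℝ} (h1 : -Real.pi < θ) (h2 : θ ≤ Real.pi) (hc : Real.cos θ < 1/2) :
    Real.pi/3 < (if 0 < θ then θ else θ + 2*Real.pi) ∧ (if 0 < θ then θ else θ + 2*Real.pi) < 5*Real.pi/3 := by
  have hpi := Real.pi_pos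
  have habs : Real.pi/3 < |θ| := by
    by_contra h
    push_neg at h
    have := Real.cos_le_cos_of_nonneg_of_le_pi (abs_nonneg θ) (by linarith) h
    rw [Real.cos_abs, Real.cos_pi_div_three] at this
    linarith
  rcases abs_cases θ with ⟨he, h0⟩ | ⟨he, h0⟩ <;> rw [he] at habs <;> split_ifs with h <;>
    constructor <;> linarith

private lemma aux_floor_eq {x y : ℝ} (h : ⌊x⌋ = ⌊y⌋) : |x - y| < 1 := by
  rw [abs_sub_lt_iff]
  have h1 := Int.floor_le x; have h2 := Int.floor_le y
  have h3 := Int.lt_floor_add_one x; have h4 := Int.lt_floor_add_one y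
  have h5 : ((⌊x⌋ : ℤ) : ℝ) = ((⌊y⌋ : ℤ) : ℝ) := by rw [h]
  constructor <;> linarith

/-- In the pendant-augmented unit disk graph on `P` with pendants at `P₀ ⊆ P`,
if `p, q ∈ P` are distinct points at Euclidean distance at most `1` (hence adjacent), then
every independent set consisting of neighbors of `p` that are not neighbors of `q` and are
distinct from `q` has at most `5` vertices. -/
theorem indep_neighbors_avoiding_le_five (P P₀ : Finset (EuclideanSpace ℝ (Fin 2)))
    (hP₀ : P₀ ⊆ P) (p q : {p // p ∈ P}) (hpq : p ≠ q)
    (hdist : dist (p : EuclideanSpace ℝ (Fin 2)) (q : EuclideanSpace ℝ (Fin 2)) ≤ 1)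
    (W : Finset ({p // p ∈ P} ⊕ {p // p ∈ P₀}))
    (hWp : ∀ w ∈ W, (pendantUnitDiskGraph P P₀).Adj (Sum.inl p) w)
    (hWq : ∀ w ∈ W, ¬ (pendantUnitDiskGraph P P₀).Adj (Sum.inl q) w)
    (hWne : ∀ w ∈ W, w ≠ Sum.inl q)
    (hWindep : ∀ a ∈ W, ∀ b ∈ W, ¬ (pendantUnitDiskGraph P P₀).Adj a b) :
    W.card ≤ 5 := by
  classical
  have hpi := Real.pi_pos
  set c : EuclideanSpace ℝ (Fin 2) → ℂ := fun x => ⟨x 0, x 1⟩ with hc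
  have hcdist : ∀ x y : EuclideanSpace ℝ (Fin 2), dist (c x) (c y) = dist x y := by
    intro x y
    rw [Complex.dist_eq_re_im, EuclideanSpace.dist_eq]
    simp [hc, Fin.sum_univ_two, Real.dist_eq, sq_abs]
  have hcinj : ∀ x y : EuclideanSpace ℝ (Fin 2), c x = c y → x = y := by
    intro x y h
    have : dist x y = 0 := by rw [← hcdist, h, dist_self]
    exact dist_eq_zero.mp this
  set zq : ℂ := c (q : EuclideanSpace ℝ (Fin 2)) - c (p : EuclideanSpace ℝ (Fin 2)) with hzqdef
  have hzq0 : zq ≠ 0 := by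
    rw [hzqdef, sub_ne_zero]
    exact fun h => hpq (Subtype.ext (hcinj _ _ h).symm)
  have hzq1 : ‖zq‖ ≤ 1 := by
    rw [hzqdef, ← Complex.dist_eq, hcdist, dist_comm]
    exact hdist
  set z : {x // x ∈ P} → ℂ :=
    fun a => c (a : EuclideanSpace ℝ (Fin 2)) - c (p : EuclideanSpace ℝ (Fin 2)) with hzdef
  set θ : {x // x ∈ P} → ℝ := fun a => (z a / zq).arg with hθdef
  set φ : {x // x ∈ P} → ℝ := fun a => if 0 < θ a then θ a else θ a + 2 * Real.pi with hφdef
  -- basic facts about points of W living in P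
  have hfact : ∀ a : {x // x ∈ P}, Sum.inl a ∈ W →
      ‖z a‖ ≤ 1 ∧ z a ≠ 0 ∧ 1 < dist (z a) zq := by
    intro a haW
    have hadj : p ≠ a ∧
        dist (p : EuclideanSpace ℝ (Fin 2)) (a : EuclideanSpace ℝ (Fin 2)) ≤ 1 := hWp _ haW
    have hnadj : ¬ (q ≠ a ∧
        dist (q : EuclideanSpace ℝ (Fin 2)) (a : EuclideanSpace ℝ (Fin 2)) ≤ 1) := hWq _ haW
    have hne : a ≠ q := fun h => hWne _ haW (by rw [h])
    have hdq : 1 < dist (q : EuclideanSpace ℝ (Fin 2)) (a : EuclideanSpace ℝ (Fin 2)) := by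
      by_contra h
      push_neg at h
      exact hnadj ⟨hne.symm, h⟩
    refine ⟨?_, ?_, ?_⟩
    · rw [hzdef]
      simp only
      rw [← Complex.dist_eq, hcdist, dist_comm]
      exact hadj.2
    · rw [hzdef]
      simp only [sub_ne_zero]
      exact fun h => hadj.1 (Subtype.ext (hcinj _ _ h).symm)
    · rw [hzdef, hzqdef]
      simp only
      rw [dist_sub_right, hcdist, dist_comm]
      exact hdq
  -- the angle facts
  have hφmem : ∀ a : {x // x ∈ P}, Sum.inl a ∈ W →
      Real.pi/3 < φ a ∧ φ a < 5*Real.pi/3 := by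
    intro a haW
    obtain ⟨h1, h0, hd⟩ := hfact a haW
    have hcos : Real.cos (θ a) < 1/2 := by
      simp only [hθdef]
      rw [aux_cos_arg_div h0 hzq0]
      have hlt := aux_inner_lt h1 hzq1 hd
      have hpos : 0 < ‖z a‖ * ‖zq‖ :=
        mul_pos (norm_pos_iff.mpr h0) (norm_pos_iff.mpr hzq0)
      rw [div_lt_iff₀ hpos]
      linarith
    simp only [hφdef]
    exact aux_phi_mem (Complex.neg_pi_lt_arg _) (Complex.arg_le_pi _) hcos
  have hpair : ∀ a, Sum.inl a ∈ W → ∀ b, Sum.inl b ∈ W → a ≠ b →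
      Real.pi/3 < |φ a - φ b| := by
    intro a haW b hbW hab
    obtain ⟨ha1, ha0, -⟩ := hfact a haW
    obtain ⟨hb1, hb0, -⟩ := hfact b hbW
    have hnadj : ¬ ((a ≠ b) ∧
        dist (a : EuclideanSpace ℝ (Fin 2)) (b : EuclideanSpace ℝ (Fin 2)) ≤ 1) :=
      hWindep _ haW _ hbW
    have hdab : 1 < dist (a : EuclideanSpace ℝ (Fin 2)) (b : EuclideanSpace ℝ (Fin 2)) := by
      by_contra h
      push_neg at h
      exact hnadj ⟨hab, h⟩
    have hdz : 1 < dist (z a) (z b) := by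
      simp only [hzdef]
      rw [dist_sub_right, hcdist]
      exact hdab
    have hcos : Real.cos (θ a - θ b) < 1/2 := by
      simp only [hθdef]
      rw [aux_cos_arg_sub_div ha0 hb0 hzq0]
      have hlt := aux_inner_lt ha1 hb1 hdz
      have hpos : 0 < ‖z a‖ * ‖z b‖ :=
        mul_pos (norm_pos_iff.mpr ha0) (norm_pos_iff.mpr hb0)
      rw [div_lt_iff₀ hpos]
      linarith
    have hcosφ : Real.cos (φ a - φ b) = Real.cos (θ a - θ b) := by
      simp only [hφdef]
      split_ifs with h1 h2 h2
      · rfl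
      · rw [show θ a - (θ b + 2*Real.pi) = (θ a - θ b) - 2*Real.pi by ring,
          Real.cos_sub_two_pi]
      · rw [show (θ a + 2*Real.pi) - θ b = (θ a - θ b) + 2*Real.pi by ring,
          Real.cos_add_two_pi]
      · rw [show (θ a + 2*Real.pi) - (θ b + 2*Real.pi) = θ a - θ b by ring]
    by_contra h
    push_neg at h
    have hmono := Real.cos_le_cos_of_nonneg_of_le_pi (abs_nonneg (φ a - φ b))
      (by linarith) h
    rw [Real.cos_abs, Real.cos_pi_div_three, hcosφ] at hmono
    linarith
  -- split W into point vertices and dummy vertices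
  have hsplit := Finset.card_filter_add_card_filter_not
    (s := W) (p := fun w => w.isLeft = true)
  set S := W.filter (fun w => w.isLeft = true) with hSdef
  set S' := W.filter (fun w => ¬ w.isLeft = true) with hS'def
  have hS'1 : S'.card ≤ 1 := by
    rw [Finset.card_le_one]
    intro w1 hw1 w2 hw2
    rcases Finset.mem_filter.mp hw1 with ⟨h1W, h1l⟩
    rcases Finset.mem_filter.mp hw2 with ⟨h2W, h2l⟩
    obtain (x | u) := w1
    · simp at h1l
    obtain (y | v) := w2
    · simp at h2l
    have hu : (p : EuclideanSpace ℝ (Fin 2)) = (u : EuclideanSpace ℝ (Fin 2)) := hWp _ h1W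
    have hv : (p : EuclideanSpace ℝ (Fin 2)) = (v : EuclideanSpace ℝ (Fin 2)) := hWp _ h2W
    exact congrArg Sum.inr (Subtype.ext (hu.symm.trans hv))
  have hS4 : S.card ≤ 4 := by
    set n : ({p // p ∈ P} ⊕ {p // p ∈ P₀}) → ℤ :=
      fun w => Sum.elim (fun a => ⌊φ a * 3 / Real.pi⌋) (fun _ => 0) w with hndef
    have hIcc : (Finset.Icc (1:ℤ) 4).card = 4 := by rw [Int.card_Icc]; rfl
    have hmem : ∀ w ∈ S, ∃ a : {x // x ∈ P}, w = Sum.inl a ∧ Sum.inl a ∈ W := by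
      intro w hw
      rcases Finset.mem_filter.mp hw with ⟨hW, hl⟩
      obtain (a | u) := w
      · exact ⟨a, rfl, hW⟩
      · simp at hl
    have hcard := Finset.card_le_card_of_injOn (s := S) (t := Finset.Icc (1:ℤ) 4) n ?_ ?_
    · rw [hIcc] at hcard
      exact hcard
    · intro w hw
      obtain ⟨a, rfl, haW⟩ := hmem w hw
      obtain ⟨hl, hr⟩ := hφmem a haW
      simp only [hndef, Sum.elim_inl]
      rw [Finset.mem_coe, Finset.mem_Icc]
      constructor
      · rw [Int.le_floor]
        rw [le_div_iff₀ hpi]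
        push_cast
        linarith
      · have : ⌊φ a * 3 / Real.pi⌋ < 5 := by
          rw [Int.floor_lt]
          rw [div_lt_iff₀ hpi]
          push_cast
          linarith
        omega
    · intro w1 hw1 w2 hw2 heq
      simp only [Finset.mem_coe] at hw1 hw2
      obtain ⟨a, rfl, haW⟩ := hmem w1 hw1
      obtain ⟨b, rfl, hbW⟩ := hmem w2 hw2
      by_cases hab : a = b
      · rw [hab]
      simp only [hndef, Sum.elim_inl] at heq
      have h1 := aux_floor_eq heq
      have h2 : |φ a * 3 / Real.pi - φ b * 3 / Real.pi| = |φ a - φ b| * (3 / Real.pi) := by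
        rw [show φ a * 3 / Real.pi - φ b * 3 / Real.pi = (φ a - φ b) * (3 / Real.pi) by ring,
          abs_mul, abs_of_pos (show (0:ℝ) < 3 / Real.pi by positivity)]
      rw [h2] at h1
      have h3 := hpair a haW b hbW hab
      have h4 := mul_lt_mul_of_pos_right h3 (show (0:ℝ) < 3 / Real.pi by positivity)
      rw [show Real.pi / 3 * (3 / Real.pi) = 1 by field_simp] at h4
      linarith
  have hsum : S.card + S'.card = W.card := hsplit
  omega
end
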